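/- arXiv:2105.11100 — 7 statements merged into one kernel-verified Lean document; each statement's English description precedes it below -/
import Mathlib

section
/- Let ω ∈ ℝ, let λu : 𝕋 → ℝ be continuous with sup_{θ} |λu(θ)⁻¹| < 1 (in particular λu(θ) ≠ 0 for all θ), and let η : 𝕋 → ℝ be continuous. Then there exists a unique continuous ξ : 𝕋 → ℝ satisfying η(θ) = λu(θ)ξ(θ) − ξ(θ+ω) for all θ, and it is obtained as the fixed point of the contraction B defined by [B(f)](θ) = λu(θ)⁻¹(η(θ) + f(θ+ω)). -/
open scoped Real

instance : Fact (0 < 2 * Real.pi) := ⟨by positivity⟩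

/-- if `sup |λu⁻¹| < 1` (and `λu` never vanishes), then there is a unique
continuous `ξ` with `η(θ) = λu(θ) ξ(θ) − ξ(θ+ω)`, obtained as the fixed point of the
contraction `B f (θ) = λu(θ)⁻¹ (η(θ) + f(θ+ω))`. -/
theorem stmt1 (ω : ℝ)
    (lamu η : C(AddCircle (2 * Real.pi), ℝ))
    (hne : ∀ θ, lamu θ ≠ 0)
    (hC1 : (⨆ θ : AddCircle (2 * Real.pi), |(lamu θ)⁻¹|) < 1)
    (B : C(AddCircle (2 * Real.pi), ℝ) → C(AddCircle (2 * Real.pi), ℝ))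
    (hB : ∀ (f : C(AddCircle (2 * Real.pi), ℝ)) (θ : AddCircle (2 * Real.pi)),
      B f θ = (lamu θ)⁻¹ * (η θ + f (θ + (ω : AddCircle (2 * Real.pi))))) :
    ∃ ξ : C(AddCircle (2 * Real.pi), ℝ),
      (∀ θ, η θ = lamu θ * ξ θ - ξ (θ + (ω : AddCircle (2 * Real.pi)))) ∧
      B ξ = ξ ∧
      ∀ ζ : C(AddCircle (2 * Real.pi), ℝ),
        (∀ θ, η θ = lamu θ * ζ θ - ζ (θ + (ω : AddCircle (2 * Real.pi)))) → ζ = ξ := by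
  set T := AddCircle (2 * Real.pi)
  set K : ℝ := ⨆ θ : T, |(lamu θ)⁻¹|
  -- boundedness of the range
  have hcont : Continuous fun θ : T => |(lamu θ)⁻¹| := by
    exact (lamu.continuous.inv₀ hne).abs
  have hbdd : BddAbove (Set.range fun θ : T => |(lamu θ)⁻¹|) :=
    (isCompact_range hcont).bddAbove
  have hle : ∀ θ : T, |(lamu θ)⁻¹| ≤ K := fun θ => le_ciSup hbdd θ
  have hK0 : 0 ≤ K := le_trans (abs_nonneg _) (hle default)
  -- B is Lipschitz with constant K
  have hlip : ∀ f g : C(T, ℝ), dist (B f) (B g) ≤ K * dist f g := by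
    intro f g
    rw [ContinuousMap.dist_le (by positivity)]
    intro θ
    rw [hB, hB, Real.dist_eq,
      show (lamu θ)⁻¹ * (η θ + f (θ + (ω : T))) - (lamu θ)⁻¹ * (η θ + g (θ + (ω : T)))
        = (lamu θ)⁻¹ * (f (θ + (ω : T)) - g (θ + (ω : T))) from by ring, abs_mul]
    have hd := ContinuousMap.dist_apply_le_dist (f := f) (g := g) (θ + (ω : T))
    rw [Real.dist_eq] at hd
    exact mul_le_mul (hle θ) hd (abs_nonneg _) hK0
  have hcw : ContractingWith ⟨K, hK0⟩ B :=
    ⟨by exact_mod_cast hC1, LipschitzWith.of_dist_le_mul hlip⟩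
  have : Nonempty C(T, ℝ) := ⟨η⟩
  let ξ := ContractingWith.fixedPoint B hcw
  have hfix : B ξ = ξ := hcw.fixedPoint_isFixedPt
  -- the fixed point equation gives the functional equation
  have hkey : ∀ ζ : C(T, ℝ),
      (∀ θ, η θ = lamu θ * ζ θ - ζ (θ + (ω : T))) ↔ B ζ = ζ := by
    intro ζ
    constructor
    · intro h
      ext θ
      have h2 : η θ + ζ (θ + (ω : T)) = lamu θ * ζ θ := by linarith [h θ]
      rw [hB, h2, inv_mul_cancel_left₀ (hne θ)]
    · intro h θ
      have h3 := congrFun (congrArg DFunLike.coe h) θ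
      rw [hB] at h3
      have h4 : lamu θ * ζ θ = η θ + ζ (θ + (ω : T)) := by
        rw [← h3, ← mul_assoc, mul_inv_cancel₀ (hne θ), one_mul]
      linarith
  refine ⟨ξ, (hkey ξ).mpr hfix, hfix, fun ζ hζ => ?_⟩
  exact hcw.fixedPoint_unique ((hkey ζ).mp hζ)
end

section
/- Let F : ℝ⁴ → ℝ⁴ be a symplectic diffeomorphism with respect to the standard symplectic form Ω(v₁,v₂) = v₁ᵀ J v₂ (J the standard 4×4 symplectic matrix), with invariant circle K satisfying F(K(θ)) = K(θ+ω), K of class C¹. Suppose v_s : 𝕋 → ℝ⁴ and continuous λs : 𝕋 → ℝ satisfy DF(K(θ)) v_s(θ) = λs(θ) v_s(θ+ω) with L := sup_θ |λs(θ)| < 1. Then Ω(DK(θ), v_s(θ)) = 0 for all θ ∈ 𝕋. -/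
open scoped Real
open Matrix

/-- The standard `4×4` symplectic matrix `J = [[0, I₂],[−I₂, 0]]`. -/
def J4 : Matrix (Fin 4) (Fin 4) ℝ :=
  !![0, 0, 1, 0; 0, 0, 0, 1; -1, 0, 0, 0; 0, -1, 0, 0]

/-- for a symplectic `C¹` diffeomorphism `F` with invariant circle `K` and
stable bundle `v_s` with `sup |λs| < 1`, the symplectic form of `DK(θ)` and `v_s(θ)`
vanishes identically. -/
theorem stmt5 (ω : ℝ)
    (F : (Fin 4 → ℝ) → (Fin 4 → ℝ)) (hF : ContDiff ℝ 1 F) (hFbij : Function.Bijective F)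
    (hsymp : ∀ (x v₁ v₂ : Fin 4 → ℝ),
      (fderiv ℝ F x v₁) ⬝ᵥ J4.mulVec (fderiv ℝ F x v₂) = v₁ ⬝ᵥ J4.mulVec v₂)
    (K : ℝ → (Fin 4 → ℝ)) (hK : ContDiff ℝ 1 K)
    (hKper : Function.Periodic K (2 * Real.pi))
    (hinv : ∀ θ, F (K θ) = K (θ + ω))
    (vs : ℝ → (Fin 4 → ℝ)) (hvsc : Continuous vs)
    (hvsper : Function.Periodic vs (2 * Real.pi))
    (lams : ℝ → ℝ) (hlamsc : Continuous lams)
    (hlamsper : Function.Periodic lams (2 * Real.pi))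
    (hvs : ∀ θ, fderiv ℝ F (K θ) (vs θ) = lams θ • vs (θ + ω))
    (hL : (⨆ θ : ℝ, |lams θ|) < 1) :
    ∀ θ, deriv K θ ⬝ᵥ J4.mulVec (vs θ) = 0 := by
  have hKd : Differentiable ℝ K := hK.differentiable one_ne_zero
  have hFd : Differentiable ℝ F := hF.differentiable one_ne_zero
  set g : ℝ → ℝ := fun θ => deriv K θ ⬝ᵥ J4.mulVec (vs θ) with hg
  -- chain rule
  have hchain : ∀ θ, fderiv ℝ F (K θ) (deriv K θ) = deriv K (θ + ω) := by
    intro θ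
    have h1 : HasDerivAt (fun t => F (K t)) (fderiv ℝ F (K θ) (deriv K θ)) θ :=
      (hFd (K θ)).hasFDerivAt.comp_hasDerivAt θ (hKd θ).hasDerivAt
    have h2 : HasDerivAt (fun t => K (t + ω)) (deriv K (θ + ω)) θ := by
      have hs : HasDerivAt (fun x : ℝ => x + ω) 1 θ := (hasDerivAt_id θ).add_const ω
      simpa [Function.comp_def] using ((hKd (θ + ω)).hasDerivAt).scomp θ hs
    have heq : (fun t => F (K t)) = fun t => K (t + ω) := funext hinv
    rw [heq] at h1
    exact h1.unique h2
  have hgid : ∀ θ, g θ = lams θ * g (θ + ω) := by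
    intro θ
    have h := hsymp (K θ) (deriv K θ) (vs θ)
    rw [hchain θ, hvs θ] at h
    rw [hg]
    simp only []
    rw [← h, Matrix.mulVec_smul, dotProduct_smul, smul_eq_mul]
  -- continuity of g
  have hdKc : Continuous (deriv K) := hK.continuous_deriv le_rfl
  have hgc : Continuous g :=
    hdKc.dotProduct ((continuous_const (y := J4)).matrix_mulVec hvsc)
  -- periodicity of deriv K
  have hdKper : Function.Periodic (deriv K) (2 * Real.pi) := by
    intro x
    have : (fun t => K (t + 2 * Real.pi)) = K := funext hKper
    calc deriv K (x + 2 * Real.pi) = deriv (fun t => K (t + 2 * Real.pi)) x := by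
          rw [deriv_comp_add_const]
      _ = deriv K x := by rw [this]
  have hgper : Function.Periodic (fun θ => |g θ|) (2 * Real.pi) := by
    intro x
    simp only [hg]
    rw [hdKper x, hvsper x]
  have h2pi : (0:ℝ) < 2 * Real.pi := by positivity
  -- bound on |lams|
  have hlamper : Function.Periodic (fun θ => |lams θ|) (2 * Real.pi) := fun x => by
    simp [hlamsper x]
  have hlbdd : BddAbove (Set.range fun θ => |lams θ|) := by
    rw [← hlamper.image_Icc h2pi 0]
    exact (isCompact_Icc.image (hlamsc.abs)).bddAbove
  have hlamle : ∀ θ, |lams θ| ≤ ⨆ θ : ℝ, |lams θ| := fun θ => le_ciSup hlbdd θ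
  have hLnn : (0:ℝ) ≤ ⨆ θ : ℝ, |lams θ| := le_trans (abs_nonneg _) (hlamle 0)
  -- max of |g|
  obtain ⟨θ₀, hθ₀mem, hθ₀max⟩ :=
    isCompact_Icc.exists_isMaxOn (Set.nonempty_Icc.2 (by linarith : (0:ℝ) ≤ 0 + 2 * Real.pi))
      (hgc.abs.continuousOn)
  have hmax : ∀ θ, |g θ| ≤ |g θ₀| := by
    intro θ
    have : |g θ| ∈ Set.range fun θ => |g θ| := ⟨θ, rfl⟩
    rw [← hgper.image_Icc h2pi 0] at this
    obtain ⟨θ', hθ', heq⟩ := this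
    rw [← heq]
    exact hθ₀max hθ'
  have key : |g θ₀| ≤ (⨆ θ : ℝ, |lams θ|) * |g θ₀| := by
    calc |g θ₀| = |lams θ₀| * |g (θ₀ + ω)| := by rw [hgid θ₀, abs_mul]
      _ ≤ (⨆ θ : ℝ, |lams θ|) * |g θ₀| :=
        mul_le_mul (hlamle θ₀) (hmax _) (abs_nonneg _) hLnn
  have hM0 : |g θ₀| = 0 := by nlinarith [abs_nonneg (g θ₀)]
  intro θ
  have := hmax θ
  rw [hM0] at this
  exact abs_eq_zero.mp (le_antisymm this (abs_nonneg _)) ▸ rfl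
end

section
/- Let F be a symplectic C¹ diffeomorphism of ℝ⁴ (for Ω(v₁,v₂)=v₁ᵀJv₂), K : 𝕋 → ℝ⁴ a C¹ invariant circle with F(K(θ)) = K(θ+ω) and DK(θ) ≠ 0, v_s and v_u stable/unstable bundles satisfying DF(K(θ))v_s(θ) = λs(θ)v_s(θ+ω), DF(K(θ))v_u(θ) = λu(θ)v_u(θ+ω) with sup|λs|<1 and inf|λu|>1. Suppose A, B, C, D : 𝕋 → ℝ satisfy DF(K(θ)) [J⁻¹DK(θ)/‖DK(θ)‖²] = A(θ)DK(θ+ω) + B(θ)J⁻¹DK(θ+ω)/‖DK(θ+ω)‖² + C(θ)v_s(θ+ω) + D(θ)v_u(θ+ω). Then B(θ) = 1 for all θ. -/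
open scoped Real
open Matrix

lemma J4_skew (v : Fin 4 → ℝ) : v ⬝ᵥ J4.mulVec v = 0 := by
  simp [J4, Matrix.mulVec, dotProduct, Fin.sum_univ_four, Matrix.vecHead,
    Matrix.vecTail, Function.comp]; ring

lemma J4_mulVec_inv (w : Fin 4 → ℝ) : J4.mulVec (J4⁻¹.mulVec w) = w := by
  have hinv : J4⁻¹ = -J4 := by
    apply Matrix.inv_eq_right_inv
    ext i j
    fin_cases i <;> fin_cases j <;>
      simp [J4, Matrix.mul_apply, Fin.sum_univ_four, Matrix.one_apply, Matrix.vecHead,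
        Matrix.vecTail, Function.comp]
  have h1 : J4 * (-J4) = 1 := by
    ext i j
    fin_cases i <;> fin_cases j <;>
      simp [J4, Matrix.mul_apply, Fin.sum_univ_four, Matrix.one_apply, Matrix.vecHead,
        Matrix.vecTail, Function.comp]
  rw [hinv, Matrix.mulVec_mulVec, h1, Matrix.one_mulVec]

lemma bound_of_periodic (f : ℝ → ℝ) (hf : Continuous f)
    (hp : Function.Periodic f (2 * Real.pi)) : ∃ M, ∀ θ, |f θ| ≤ M := by
  have h2pi : (2 : ℝ) * Real.pi ≠ 0 := by positivity
  obtain ⟨r, hr⟩ := (hp.isBounded_of_continuous h2pi hf).subset_closedBall 0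
  refine ⟨r, fun θ => ?_⟩
  have := hr (Set.mem_range_self θ)
  simpa [Real.dist_eq] using this

lemma stable_zero (ω : ℝ) (g lam : ℝ → ℝ) (hg : ∀ θ, g θ = lam θ * g (θ + ω))
    (M : ℝ) (hM : ∀ θ, |g θ| ≤ M) (L : ℝ) (hL0 : 0 ≤ L) (hL1 : L < 1)
    (hlam : ∀ θ, |lam θ| ≤ L) : ∀ θ, g θ = 0 := by
  have key : ∀ n θ, |g θ| ≤ L ^ n * M := by
    intro n
    induction n with
    | zero => intro θ; simpa using hM θ
    | succ n ih =>
      intro θ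
      calc |g θ| = |lam θ| * |g (θ + ω)| := by rw [hg θ, abs_mul]
        _ ≤ L * (L ^ n * M) :=
            mul_le_mul (hlam θ) (ih (θ + ω)) (abs_nonneg _)  hL0
        _ = L ^ (n + 1) * M := by ring
  intro θ
  have htend : Filter.Tendsto (fun n : ℕ => L ^ n * M) Filter.atTop (nhds 0) := by
    have := (tendsto_pow_atTop_nhds_zero_of_lt_one hL0 hL1).mul_const M
    simpa using this
  have h0 : |g θ| ≤ 0 := ge_of_tendsto' htend fun n => key n θ
  exact abs_eq_zero.mp (le_antisymm h0 (abs_nonneg _))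

lemma unstable_zero (ω : ℝ) (g lam : ℝ → ℝ) (hg : ∀ θ, g θ = lam θ * g (θ + ω))
    (M : ℝ) (hM : ∀ θ, |g θ| ≤ M) (L : ℝ) (hL1 : 1 < L)
    (hlam : ∀ θ, L ≤ |lam θ|) : ∀ θ, g θ = 0 := by
  have hL0 : 0 < L := lt_trans one_pos hL1
  have key : ∀ (n : ℕ) (θ : ℝ), L ^ n * |g θ| ≤ |g (θ - (n : ℝ) * ω)| := by
    intro n
    induction n with
    | zero => intro θ; simp
    | succ n ih =>
      intro θ
      have heq : (θ : ℝ) - (n + 1 : ℕ) * ω + ω = θ - n * ω := by push_cast; ring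
      calc L ^ (n + 1) * |g θ| = L * (L ^ n * |g θ|) := by ring
        _ ≤ L * |g (θ - n * ω)| := by
            exact mul_le_mul_of_nonneg_left (ih θ) hL0.le
        _ ≤ |lam (θ - (n + 1 : ℕ) * ω)| * |g (θ - (n + 1 : ℕ) * ω + ω)| := by
            rw [heq]
            exact mul_le_mul_of_nonneg_right (hlam _) (abs_nonneg _)
        _ = |g (θ - (n + 1 : ℕ) * ω)| := by rw [← abs_mul, ← hg]
  intro θ
  by_contra hne
  have hpos : 0 < |g θ| := abs_pos.mpr hne
  have htend : Filter.Tendsto (fun n : ℕ => L ^ n * |g θ|) Filter.atTop Filter.atTop :=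
    (tendsto_pow_atTop_atTop_of_one_lt hL1).atTop_mul_const hpos
  obtain ⟨n, hn⟩ := (htend.eventually_gt_atTop M).exists
  exact absurd (le_trans (key n θ) (hM _)) (not_le.mpr hn)

/-- in the decomposition
`DF(K(θ))[J⁻¹DK(θ)/‖DK(θ)‖²] = A DK(θ+ω) + B J⁻¹DK(θ+ω)/‖DK(θ+ω)‖² + C v_s(θ+ω) + D v_u(θ+ω)`,
the coefficient `B` is identically `1` (here `‖DK‖² = DK ⬝ᵥ DK`). -/
theorem stmt7 (ω : ℝ)
    (F : (Fin 4 → ℝ) → (Fin 4 → ℝ)) (hF : ContDiff ℝ 1 F) (hFbij : Function.Bijective F)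
    (hsymp : ∀ (x v₁ v₂ : Fin 4 → ℝ),
      (fderiv ℝ F x v₁) ⬝ᵥ J4.mulVec (fderiv ℝ F x v₂) = v₁ ⬝ᵥ J4.mulVec v₂)
    (K : ℝ → (Fin 4 → ℝ)) (hK : ContDiff ℝ 1 K)
    (hKper : Function.Periodic K (2 * Real.pi))
    (hinv : ∀ θ, F (K θ) = K (θ + ω))
    (hDK : ∀ θ, deriv K θ ≠ 0)
    (vs : ℝ → (Fin 4 → ℝ)) (hvsc : Continuous vs)
    (hvsper : Function.Periodic vs (2 * Real.pi))
    (lams : ℝ → ℝ) (hlamsc : Continuous lams)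
    (hlamsper : Function.Periodic lams (2 * Real.pi))
    (hvs : ∀ θ, fderiv ℝ F (K θ) (vs θ) = lams θ • vs (θ + ω))
    (hL : (⨆ θ : ℝ, |lams θ|) < 1)
    (vu : ℝ → (Fin 4 → ℝ)) (hvuc : Continuous vu)
    (hvuper : Function.Periodic vu (2 * Real.pi))
    (lamu : ℝ → ℝ) (hlamuc : Continuous lamu)
    (hlamuper : Function.Periodic lamu (2 * Real.pi))
    (hvu : ∀ θ, fderiv ℝ F (K θ) (vu θ) = lamu θ • vu (θ + ω))
    (hLu : 1 < ⨅ θ : ℝ, |lamu θ|)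
    (A B Cf Df : ℝ → ℝ)
    (hdecomp : ∀ θ,
      fderiv ℝ F (K θ) ((deriv K θ ⬝ᵥ deriv K θ)⁻¹ • (J4⁻¹.mulVec (deriv K θ)))
        = A θ • deriv K (θ + ω)
          + B θ • ((deriv K (θ + ω) ⬝ᵥ deriv K (θ + ω))⁻¹ • (J4⁻¹.mulVec (deriv K (θ + ω))))
          + Cf θ • vs (θ + ω) + Df θ • vu (θ + ω)) :
    ∀ θ, B θ = 1 := by
  -- basic differentiability facts
  have hKd : ∀ θ, DifferentiableAt ℝ K θ := fun θ => (hK.differentiable one_ne_zero) θ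
  have hFd : ∀ x, DifferentiableAt ℝ F x := fun x => (hF.differentiable one_ne_zero) x
  -- chain rule: DF(K θ)(DK θ) = DK (θ+ω)
  have hchain : ∀ θ, fderiv ℝ F (K θ) (deriv K θ) = deriv K (θ + ω) := by
    intro θ
    have h1 : HasDerivAt (F ∘ K) (fderiv ℝ F (K θ) (deriv K θ)) θ :=
      (hFd (K θ)).hasFDerivAt.comp_hasDerivAt θ (hKd θ).hasDerivAt
    have h2 : HasDerivAt (fun t => K (t + ω)) (deriv K (θ + ω)) θ :=
      (hKd (θ + ω)).hasDerivAt.comp_add_const θ ω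
    have heq : (F ∘ K) = fun t => K (t + ω) := funext fun t => hinv t
    rw [heq] at h1
    exact h1.unique h2
  -- continuity and periodicity of deriv K
  have hdKc : Continuous (deriv K) := hK.continuous_deriv le_rfl
  have hdKper : Function.Periodic (deriv K) (2 * Real.pi) := by
    intro θ
    have heq : (fun x => K (x + 2 * Real.pi)) = K := funext fun x => hKper x
    rw [← deriv_comp_add_const K (2 * Real.pi) θ, heq]
  -- bounds for lams/lamu
  obtain ⟨Ms, hMs⟩ := bound_of_periodic lams hlamsc hlamsper
  have hbddS : BddAbove (Set.range fun θ => |lams θ|) :=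
    ⟨Ms, Set.forall_mem_range.mpr hMs⟩
  have hlamsle : ∀ θ, |lams θ| ≤ ⨆ θ : ℝ, |lams θ| := fun θ => le_ciSup hbddS θ
  have hL0 : 0 ≤ ⨆ θ : ℝ, |lams θ| := le_trans (abs_nonneg _) (hlamsle 0)
  have hlamuge : ∀ θ, (⨅ θ : ℝ, |lamu θ|) ≤ |lamu θ| := fun θ =>
    ciInf_le ⟨0, Set.forall_mem_range.mpr fun θ => abs_nonneg _⟩ θ
  -- the pairing functions g (stable) and h (unstable)
  set g : ℝ → ℝ := fun θ => deriv K θ ⬝ᵥ J4.mulVec (vs θ) with hgdef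
  set h : ℝ → ℝ := fun θ => deriv K θ ⬝ᵥ J4.mulVec (vu θ) with hhdef
  have hgc : Continuous g := by
    apply Continuous.dotProduct hdKc
    exact Continuous.matrix_mulVec continuous_const hvsc
  have hhc : Continuous h := by
    apply Continuous.dotProduct hdKc
    exact Continuous.matrix_mulVec continuous_const hvuc
  have hgper : Function.Periodic g (2 * Real.pi) := fun θ => by
    simp only [hgdef, hdKper θ, hvsper θ]
  have hhper : Function.Periodic h (2 * Real.pi) := fun θ => by
    simp only [hhdef, hdKper θ, hvuper θ]
  obtain ⟨Mg, hMg⟩ := bound_of_periodic g hgc hgper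
  obtain ⟨Mh, hMh⟩ := bound_of_periodic h hhc hhper
  have hgrec : ∀ θ, g θ = lams θ * g (θ + ω) := by
    intro θ
    have := hsymp (K θ) (deriv K θ) (vs θ)
    rw [hchain, hvs, Matrix.mulVec_smul, dotProduct_smul] at this
    simpa [hgdef, smul_eq_mul] using this.symm
  have hhrec : ∀ θ, h θ = lamu θ * h (θ + ω) := by
    intro θ
    have := hsymp (K θ) (deriv K θ) (vu θ)
    rw [hchain, hvu, Matrix.mulVec_smul, dotProduct_smul] at this
    simpa [hhdef, smul_eq_mul] using this.symm
  have hg0 : ∀ θ, g θ = 0 :=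
    stable_zero ω g lams hgrec Mg hMg _ hL0 hL hlamsle
  have hh0 : ∀ θ, h θ = 0 :=
    unstable_zero ω h lamu hhrec Mh hMh _ hLu hlamuge
  -- main computation
  intro θ
  have hd := congrArg (fun v => deriv K (θ + ω) ⬝ᵥ J4.mulVec v) (hdecomp θ)
  -- LHS equals 1
  have hlhs : deriv K (θ + ω) ⬝ᵥ J4.mulVec
      (fderiv ℝ F (K θ) ((deriv K θ ⬝ᵥ deriv K θ)⁻¹ • (J4⁻¹.mulVec (deriv K θ)))) = 1 := by
    rw [← hchain θ, hsymp, Matrix.mulVec_smul, dotProduct_smul, J4_mulVec_inv]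
    have hne : deriv K θ ⬝ᵥ deriv K θ ≠ 0 := fun hc => hDK θ (dotProduct_self_eq_zero.mp hc)
    simp [smul_eq_mul, inv_mul_cancel₀ hne]
  rw [hlhs] at hd
  -- RHS equals B θ
  have hne' : deriv K (θ + ω) ⬝ᵥ deriv K (θ + ω) ≠ 0 := fun hc =>
    hDK (θ + ω) (dotProduct_self_eq_zero.mp hc)
  have hgθ : deriv K (θ + ω) ⬝ᵥ J4.mulVec (vs (θ + ω)) = 0 := hg0 (θ + ω)
  have hhθ : deriv K (θ + ω) ⬝ᵥ J4.mulVec (vu (θ + ω)) = 0 := hh0 (θ + ω)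
  simp only [Matrix.mulVec_add, Matrix.mulVec_smul, dotProduct_add,
    dotProduct_smul, J4_mulVec_inv, J4_skew, hgθ, hhθ, smul_eq_mul,
    mul_zero, add_zero, zero_add] at hd
  rw [inv_mul_cancel₀ hne', mul_one] at hd
  exact hd.symm
end

section
/- With the assumptions of the previous statement, suppose further that f₁, f₂ : 𝕋 → ℝ solve C(θ) = f₁(θ+ω) − λs(θ)f₁(θ) and D(θ) = f₂(θ+ω) − λu(θ)f₂(θ). Then v_c(θ) := J⁻¹DK(θ)/‖DK(θ)‖² + f₁(θ)v_s(θ) + f₂(θ)v_u(θ) satisfies DF(K(θ)) v_c(θ) = T(θ) DK(θ+ω) + v_c(θ+ω) with T(θ) = A(θ); i.e., v_c is a symplectic conjugate center direction to DK. -/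
open scoped Real
open Matrix

lemma J4_mul_neg_J4 : J4 * (-J4) = 1 := by
  ext i j
  fin_cases i <;> fin_cases j <;>
    simp [J4, Matrix.mul_apply, Fin.sum_univ_four, Matrix.one_apply, Matrix.vecHead, Matrix.vecTail]

lemma J4_inv : J4⁻¹ = -J4 := inv_eq_right_inv J4_mul_neg_J4

lemma dot_J4_self (w : Fin 4 → ℝ) : w ⬝ᵥ J4.mulVec w = 0 := by
  simp [J4, Matrix.mulVec, dotProduct, Fin.sum_univ_four, Matrix.vecHead, Matrix.vecTail]
  ring

lemma J4inv_dot_J4 (w : Fin 4 → ℝ) :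
    (J4⁻¹.mulVec w) ⬝ᵥ J4.mulVec w = -(w ⬝ᵥ w) := by
  rw [J4_inv]
  simp [J4, Matrix.mulVec, dotProduct, Fin.sum_univ_four, Matrix.vecHead, Matrix.vecTail]
  ring

/-- with `f₁, f₂` solving `C(θ) = f₁(θ+ω) − λs(θ)f₁(θ)` and
`D(θ) = f₂(θ+ω) − λu(θ)f₂(θ)`, the vector
`v_c(θ) = J⁻¹DK(θ)/‖DK(θ)‖² + f₁(θ)v_s(θ) + f₂(θ)v_u(θ)` is a symplectic-conjugate
center direction: `DF(K(θ)) v_c(θ) = A(θ) DK(θ+ω) + v_c(θ+ω)` (with `T = A`). -/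
theorem stmt8 (ω : ℝ)
    (F : (Fin 4 → ℝ) → (Fin 4 → ℝ)) (hF : ContDiff ℝ 1 F) (hFbij : Function.Bijective F)
    (hsymp : ∀ (x v₁ v₂ : Fin 4 → ℝ),
      (fderiv ℝ F x v₁) ⬝ᵥ J4.mulVec (fderiv ℝ F x v₂) = v₁ ⬝ᵥ J4.mulVec v₂)
    (K : ℝ → (Fin 4 → ℝ)) (hK : ContDiff ℝ 1 K)
    (hKper : Function.Periodic K (2 * Real.pi))
    (hinv : ∀ θ, F (K θ) = K (θ + ω))
    (hDK : ∀ θ, deriv K θ ≠ 0)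
    (vs : ℝ → (Fin 4 → ℝ)) (hvsc : Continuous vs)
    (hvsper : Function.Periodic vs (2 * Real.pi))
    (lams : ℝ → ℝ) (hlamsc : Continuous lams)
    (hlamsper : Function.Periodic lams (2 * Real.pi))
    (hvs : ∀ θ, fderiv ℝ F (K θ) (vs θ) = lams θ • vs (θ + ω))
    (hL : (⨆ θ : ℝ, |lams θ|) < 1)
    (vu : ℝ → (Fin 4 → ℝ)) (hvuc : Continuous vu)
    (hvuper : Function.Periodic vu (2 * Real.pi))
    (lamu : ℝ → ℝ) (hlamuc : Continuous lamu)
    (hlamuper : Function.Periodic lamu (2 * Real.pi))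
    (hvu : ∀ θ, fderiv ℝ F (K θ) (vu θ) = lamu θ • vu (θ + ω))
    (hLu : 1 < ⨅ θ : ℝ, |lamu θ|)
    (A B Cf Df : ℝ → ℝ)
    (hdecomp : ∀ θ,
      fderiv ℝ F (K θ) ((deriv K θ ⬝ᵥ deriv K θ)⁻¹ • (J4⁻¹.mulVec (deriv K θ)))
        = A θ • deriv K (θ + ω)
          + B θ • ((deriv K (θ + ω) ⬝ᵥ deriv K (θ + ω))⁻¹ • (J4⁻¹.mulVec (deriv K (θ + ω))))
          + Cf θ • vs (θ + ω) + Df θ • vu (θ + ω))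
    (f₁ f₂ : ℝ → ℝ)
    (hf₁ : ∀ θ, Cf θ = f₁ (θ + ω) - lams θ * f₁ θ)
    (hf₂ : ∀ θ, Df θ = f₂ (θ + ω) - lamu θ * f₂ θ)
    (vc : ℝ → (Fin 4 → ℝ))
    (hvcdef : ∀ θ, vc θ = (deriv K θ ⬝ᵥ deriv K θ)⁻¹ • (J4⁻¹.mulVec (deriv K θ))
      + f₁ θ • vs θ + f₂ θ • vu θ) :
    ∀ θ, fderiv ℝ F (K θ) (vc θ) = A θ • deriv K (θ + ω) + vc (θ + ω) := by
  have hKd : Differentiable ℝ K := hK.differentiable one_ne_zero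
  have hFd : Differentiable ℝ F := hF.differentiable one_ne_zero
  have hp0 : (2 * Real.pi) ≠ 0 := by positivity
  -- DF maps DK(θ) to DK(θ+ω)
  have hDFK : ∀ θ, fderiv ℝ F (K θ) (deriv K θ) = deriv K (θ + ω) := by
    intro θ
    have h3 : HasDerivAt (fun t => F (K t)) (fderiv ℝ F (K θ) (deriv K θ)) θ :=
      (hFd (K θ)).hasFDerivAt.comp_hasDerivAt θ (hKd θ).hasDerivAt
    have h4 : HasDerivAt (fun t => K (t + ω)) (deriv K (θ + ω)) θ :=
      (hKd (θ + ω)).hasDerivAt.comp_add_const θ ω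
    have h5 : (fun t => F (K t)) = fun t => K (t + ω) := funext hinv
    rw [h5] at h3
    exact h3.unique h4
  -- deriv K is continuous and periodic
  have hDKc : Continuous (deriv K) := hK.continuous_deriv le_rfl
  have hDKper : Function.Periodic (deriv K) (2 * Real.pi) := by
    intro x
    have h : (fun y => K (y + 2 * Real.pi)) = K := funext fun y => hKper y
    rw [← deriv_comp_add_const K (2 * Real.pi) x, h]
  -- nonvanishing of ‖DK‖²
  have hDK2 : ∀ θ, deriv K θ ⬝ᵥ deriv K θ ≠ 0 := fun θ h =>
    hDK θ (dotProduct_self_eq_zero.mp h)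
  -- pairing of the conjugate direction with J·DK is -1
  have hcJ : ∀ θ, ((deriv K θ ⬝ᵥ deriv K θ)⁻¹ • (J4⁻¹.mulVec (deriv K θ)))
      ⬝ᵥ J4.mulVec (deriv K θ) = -1 := by
    intro θ
    rw [smul_dotProduct, J4inv_dot_J4, smul_eq_mul, mul_neg,
      inv_mul_cancel₀ (hDK2 θ)]
  -- the stable pairing gs
  set gs : ℝ → ℝ := fun θ => vs θ ⬝ᵥ J4.mulVec (deriv K θ) with hgs_def
  have hgs_rec : ∀ θ, lams θ * gs (θ + ω) = gs θ := by
    intro θ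
    have h := hsymp (K θ) (vs θ) (deriv K θ)
    rw [hvs, hDFK, smul_dotProduct, smul_eq_mul] at h
    exact h
  set gu : ℝ → ℝ := fun θ => vu θ ⬝ᵥ J4.mulVec (deriv K θ) with hgu_def
  have hgu_rec : ∀ θ, lamu θ * gu (θ + ω) = gu θ := by
    intro θ
    have h := hsymp (K θ) (vu θ) (deriv K θ)
    rw [hvu, hDFK, smul_dotProduct, smul_eq_mul] at h
    exact h
  -- continuity and boundedness of gs, gu
  have hdotc : ∀ (v : ℝ → Fin 4 → ℝ), Continuous v →
      Continuous fun θ => v θ ⬝ᵥ J4.mulVec (deriv K θ) := by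
    intro v hv
    have : (fun θ => v θ ⬝ᵥ J4.mulVec (deriv K θ))
        = fun θ => ∑ i : Fin 4, v θ i * ∑ j : Fin 4, J4 i j * deriv K θ j := by
      funext θ; simp [dotProduct, Matrix.mulVec]
    rw [this]
    exact continuous_finset_sum _ fun i _ =>
      ((continuous_apply i).comp hv).mul
        (continuous_finset_sum _ fun j _ =>
          continuous_const.mul ((continuous_apply j).comp hDKc))
  have hboundaux : ∀ (g : ℝ → ℝ), Continuous g → Function.Periodic g (2 * Real.pi) →
      ∃ M : ℝ, 0 ≤ M ∧ ∀ θ, |g θ| ≤ M := by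
    intro g hgc hgp
    obtain ⟨M, hM⟩ := isBounded_iff_forall_norm_le.mp
      (hgp.isBounded_of_continuous hp0 hgc)
    exact ⟨M, le_trans (norm_nonneg (g 0)) (hM _ ⟨0, rfl⟩),
      fun θ => hM _ ⟨θ, rfl⟩⟩
  obtain ⟨Ms, hMs0, hMs⟩ := hboundaux gs (hdotc vs hvsc)
    (fun x => by simp only [hgs_def]; rw [hvsper x, hDKper x])
  obtain ⟨Mu, hMu0, hMu⟩ := hboundaux gu (hdotc vu hvuc)
    (fun x => by simp only [hgu_def]; rw [hvuper x, hDKper x])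
  -- sup/inf bounds on multipliers
  set L := ⨆ θ : ℝ, |lams θ| with hLdef
  have hLbd : BddAbove (Set.range fun θ => |lams θ|) := by
    obtain ⟨M, _, hM⟩ := hboundaux (fun θ => |lams θ|) hlamsc.abs
      (fun x => by simp [hlamsper x])
    exact ⟨M, fun y ⟨θ, hθ⟩ => hθ ▸ le_trans (le_abs_self _) (hM θ)⟩
  have hLθ : ∀ θ, |lams θ| ≤ L := fun θ => le_ciSup hLbd θ
  have hL0 : 0 ≤ L := le_trans (abs_nonneg _) (hLθ 0)
  set Lu := ⨅ θ : ℝ, |lamu θ| with hLudef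
  have hLuθ : ∀ θ, Lu ≤ |lamu θ| := fun θ =>
    ciInf_le ⟨0, fun y ⟨θ', hθ'⟩ => hθ' ▸ abs_nonneg _⟩ θ
  have hLu0 : 0 < Lu := lt_trans one_pos hLu
  -- gs vanishes
  have hgs0 : ∀ θ, gs θ = 0 := by
    have key : ∀ n : ℕ, ∀ θ, |gs θ| ≤ L ^ n * Ms := by
      intro n
      induction n with
      | zero => simpa using hMs
      | succ n ih =>
        intro θ
        calc |gs θ| = |lams θ| * |gs (θ + ω)| := by rw [← hgs_rec θ, abs_mul]
          _ ≤ L * (L ^ n * Ms) :=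
            mul_le_mul (hLθ θ) (ih _) (abs_nonneg _) hL0
          _ = L ^ (n + 1) * Ms := by ring
    intro θ
    have htend : Filter.Tendsto (fun n : ℕ => L ^ n * Ms) Filter.atTop (nhds 0) := by
      simpa using (tendsto_pow_atTop_nhds_zero_of_lt_one hL0 hL).mul_const Ms
    have : |gs θ| ≤ 0 := ge_of_tendsto' htend fun n => key n θ
    exact abs_nonpos_iff.mp this
  -- gu vanishes
  have hgu0 : ∀ θ, gu θ = 0 := by
    have key : ∀ n : ℕ, ∀ θ, |gu θ| ≤ Lu⁻¹ ^ n * Mu := by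
      intro n
      induction n with
      | zero => simpa using hMu
      | succ n ih =>
        intro θ
        have hrec := hgu_rec (θ - ω)
        rw [sub_add_cancel] at hrec
        have habs : |gu (θ - ω)| = |lamu (θ - ω)| * |gu θ| := by
          rw [← hrec, abs_mul]
        have h1 : Lu * |gu θ| ≤ |gu (θ - ω)| := by
          rw [habs]
          exact mul_le_mul_of_nonneg_right (hLuθ _) (abs_nonneg _)
        calc |gu θ| = Lu⁻¹ * (Lu * |gu θ|) := by field_simp
          _ ≤ Lu⁻¹ * |gu (θ - ω)| :=
            mul_le_mul_of_nonneg_left h1 (by positivity)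
          _ ≤ Lu⁻¹ * (Lu⁻¹ ^ n * Mu) :=
            mul_le_mul_of_nonneg_left (ih _) (by positivity)
          _ = Lu⁻¹ ^ (n + 1) * Mu := by ring
    intro θ
    have hinvlt : Lu⁻¹ < 1 := inv_lt_one_of_one_lt₀ hLu
    have htend : Filter.Tendsto (fun n : ℕ => Lu⁻¹ ^ n * Mu) Filter.atTop (nhds 0) := by
      simpa using (tendsto_pow_atTop_nhds_zero_of_lt_one (by positivity) hinvlt).mul_const Mu
    have : |gu θ| ≤ 0 := ge_of_tendsto' htend fun n => key n θ
    exact abs_nonpos_iff.mp this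
  -- B ≡ 1
  have hB : ∀ θ, B θ = 1 := by
    intro θ
    have h := hsymp (K θ)
      ((deriv K θ ⬝ᵥ deriv K θ)⁻¹ • (J4⁻¹.mulVec (deriv K θ))) (deriv K θ)
    rw [hdecomp θ, hDFK θ, hcJ θ] at h
    have e1 := dot_J4_self (deriv K (θ + ω))
    have e2 := hcJ (θ + ω)
    have e3 := hgs0 (θ + ω)
    have e4 := hgu0 (θ + ω)
    simp only [add_dotProduct, smul_dotProduct, smul_eq_mul, e1, e2,
      hgs_def, hgu_def] at h e3 e4
    rw [e3, e4] at h
    linarith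
  -- conclusion
  intro θ
  rw [hvcdef θ, hvcdef (θ + ω)]
  have t2 : fderiv ℝ F (K θ) (f₁ θ • vs θ) = f₁ θ • (lams θ • vs (θ + ω)) := by
    rw [_root_.map_smul, hvs θ]
  have t3 : fderiv ℝ F (K θ) (f₂ θ • vu θ) = f₂ θ • (lamu θ • vu (θ + ω)) := by
    rw [_root_.map_smul, hvu θ]
  rw [map_add, map_add, t2, t3, hdecomp θ, hB θ, hf₁ θ, hf₂ θ]
  simp only [one_smul, sub_smul, smul_smul]
  module
end

section
/- Let λ ∈ ℝ with |λ| < 1 (stable case), k ≥ 2 an integer, ω ∈ ℝ, and suppose P : 𝕋 → GL(4,ℝ) is continuous with continuous inverse and Λ is a constant invertible matrix of the form [[1,T,0,0],[0,1,0,0],[0,0,λs,0],[0,0,0,λu]] with λ = λs, |λs| < 1 < |λu|, satisfying DF(K(θ))P(θ) = P(θ+ω)Λ. Given continuous E_k : 𝕋 → ℝ⁴, the sequence W_{k,0} = 0, W_{k,i+1}(θ) = λ^k DF(K(θ))⁻¹ W_{k,i}(θ+ω) − DF(K(θ))⁻¹ E_k(θ) converges uniformly to a continuous W_k : 𝕋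 → ℝ⁴ satisfying DF(K(θ)) W_k(θ) − λ^k W_k(θ+ω) = −E_k(θ). -/
open scoped Real
open Matrix

lemma myPeriodicBound {f : ℝ → ℝ} (hc : Continuous f)
    (hp : Function.Periodic f (2 * Real.pi)) : ∃ C, 0 ≤ C ∧ ∀ x, f x ≤ C := by
  obtain ⟨C, hC⟩ := (isCompact_Icc (a := (0:ℝ)) (b := 2 * Real.pi)).exists_bound_of_continuousOn
    hc.continuousOn
  refine ⟨max C 0, le_max_right _ _, fun x => ?_⟩
  obtain ⟨y, hy, hxy⟩ := hp.exists_mem_Ico₀ Real.two_pi_pos x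
  calc f x = f y := hxy
    _ ≤ |f y| := le_abs_self _
    _ ≤ C := by simpa using hC y ⟨hy.1, hy.2.le⟩
    _ ≤ max C 0 := le_max_left _ _

lemma myMulVecBound (M : Matrix (Fin 4) (Fin 4) ℝ) (v : Fin 4 → ℝ) {c : ℝ}
    (hc : 0 ≤ c) (hM : ∀ i j, |M i j| ≤ c) : ‖M.mulVec v‖ ≤ 4 * c * ‖v‖ := by
  rw [pi_norm_le_iff_of_nonneg (by positivity)]
  intro i
  have h1 : ∀ j, |M i j * v j| ≤ c * ‖v‖ := by
    intro j
    rw [abs_mul]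
    exact mul_le_mul (hM i j) (norm_le_pi_norm v j) (abs_nonneg _) hc
  calc ‖M.mulVec v i‖ = |∑ j, M i j * v j| := by
        simp [Matrix.mulVec, dotProduct, Real.norm_eq_abs]
    _ ≤ ∑ j, |M i j * v j| := Finset.abs_sum_le_sum_abs _ _
    _ ≤ ∑ _j : Fin 4, c * ‖v‖ := Finset.sum_le_sum (fun j _ => h1 j)
    _ = 4 * c * ‖v‖ := by simp [Fin.sum_univ_four]; ring

lemma myEntryBound {P : ℝ → Matrix (Fin 4) (Fin 4) ℝ} (hPc : Continuous P)
    (hPper : Function.Periodic P (2 * Real.pi)) :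
    ∃ C, 0 ≤ C ∧ ∀ θ (i j : Fin 4), |P θ i j| ≤ C := by
  obtain ⟨C, hC0, hC⟩ := myPeriodicBound
    (f := fun θ => ∑ i : Fin 4, ∑ j : Fin 4, |P θ i j|)
    (continuous_finset_sum _ fun i _ => continuous_finset_sum _ fun j _ =>
      (hPc.matrix_elem i j).abs)
    (fun θ => by simp [hPper θ])
  refine ⟨C, hC0, fun θ i j => ?_⟩
  calc |P θ i j| ≤ ∑ j' : Fin 4, |P θ i j'| :=
        Finset.single_le_sum (f := fun j' => |P θ i j'|)
          (fun _ _ => abs_nonneg _) (Finset.mem_univ j)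
    _ ≤ ∑ i' : Fin 4, ∑ j' : Fin 4, |P θ i' j'| :=
        Finset.single_le_sum (f := fun i' => ∑ j' : Fin 4, |P θ i' j'|)
          (fun _ _ => Finset.sum_nonneg fun _ _ => abs_nonneg _) (Finset.mem_univ i)
    _ ≤ C := hC θ

noncomputable def Naux (T lams lamu : ℝ) (m : ℕ) : Matrix (Fin 4) (Fin 4) ℝ :=
  !![1, -(m:ℝ) * T, 0, 0; 0, 1, 0, 0; 0, 0, lams⁻¹ ^ m, 0; 0, 0, 0, lamu⁻¹ ^ m]

lemma Naux_one_mul (T lams lamu : ℝ) (m : ℕ) :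
    Naux T lams lamu 1 * Naux T lams lamu m = Naux T lams lamu (m + 1) := by
  ext i j
  fin_cases i <;> fin_cases j <;>
    simp [Naux, Matrix.mul_apply, Fin.sum_univ_four, pow_succ, Matrix.vecHead,
      Matrix.vecTail] <;> push_cast <;> ring

lemma Lam_mul_N1 (T lams lamu : ℝ) (h1 : lams ≠ 0) (h2 : lamu ≠ 0) :
    (!![1, T, 0, 0; 0, 1, 0, 0; 0, 0, lams, 0; 0, 0, 0, lamu] : Matrix (Fin 4) (Fin 4) ℝ)
      * Naux T lams lamu 1 = 1 := by
  ext i j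
  fin_cases i <;> fin_cases j <;>
    simp [Naux, Matrix.mul_apply, Fin.sum_univ_four, Matrix.one_apply, Matrix.vecHead,
      Matrix.vecTail] <;> field_simp

set_option maxHeartbeats 1000000 in
/-- stable case `|λ| < 1`, `λ = λs`: the fixed-point iteration
`W_{k,0} = 0`, `W_{k,i+1}(θ) = λ^k DF(K(θ))⁻¹ W_{k,i}(θ+ω) − DF(K(θ))⁻¹ E_k(θ)`
converges uniformly to a continuous `W_k` solving
`DF(K(θ)) W_k(θ) − λ^k W_k(θ+ω) = −E_k(θ)`. -/
theorem stmt10 (ω T lams lamu lam : ℝ) (k : ℕ) (hk : 2 ≤ k)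
    (hlam : lam = lams) (hls : |lams| < 1) (hls0 : lams ≠ 0) (hlu : 1 < |lamu|)
    (F : (Fin 4 → ℝ) → (Fin 4 → ℝ)) (hF : ContDiff ℝ 1 F)
    (K : ℝ → (Fin 4 → ℝ)) (hKc : Continuous K)
    (hKper : Function.Periodic K (2 * Real.pi))
    (hinv : ∀ θ, F (K θ) = K (θ + ω))
    (DFm : ℝ → Matrix (Fin 4) (Fin 4) ℝ)
    (hDFm : ∀ θ (v : Fin 4 → ℝ), fderiv ℝ F (K θ) v = (DFm θ).mulVec v)
    (P : ℝ → Matrix (Fin 4) (Fin 4) ℝ) (hPc : Continuous P)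
    (hPper : Function.Periodic P (2 * Real.pi))
    (hPinv : ∀ θ, IsUnit (P θ).det)
    (Λ : Matrix (Fin 4) (Fin 4) ℝ)
    (hΛ : Λ = !![1, T, 0, 0; 0, 1, 0, 0; 0, 0, lams, 0; 0, 0, 0, lamu])
    (hPΛ : ∀ θ, DFm θ * P θ = P (θ + ω) * Λ)
    (Ek : ℝ → (Fin 4 → ℝ)) (hEkc : Continuous Ek)
    (hEkper : Function.Periodic Ek (2 * Real.pi))
    (W : ℕ → ℝ → (Fin 4 → ℝ)) (hW0 : ∀ θ, W 0 θ = 0)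
    (hWrec : ∀ i θ, W (i + 1) θ
      = lam ^ k • (DFm θ)⁻¹.mulVec (W i (θ + ω)) - (DFm θ)⁻¹.mulVec (Ek θ)) :
    ∃ Wk : ℝ → (Fin 4 → ℝ), Continuous Wk ∧
      TendstoUniformly (fun i θ => W i θ) Wk Filter.atTop ∧
      ∀ θ, (DFm θ).mulVec (Wk θ) - lam ^ k • Wk (θ + ω) = -(Ek θ) := by
  have hlu0 : lamu ≠ 0 := by
    intro h; rw [h] at hlu; norm_num at hlu
  set s := |lams| with hs
  have hs0 : 0 < s := abs_pos.mpr hls0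
  have hs1 : s < 1 := hls
  set N := Naux T lams lamu with hNdef
  have hΛN : Λ * N 1 = 1 := by rw [hΛ]; exact Lam_mul_N1 T lams lamu hls0 hlu0
  have hN1Λ : N 1 * Λ = 1 := mul_eq_one_comm.mp hΛN
  have hPP : ∀ θ, P θ * (P θ)⁻¹ = 1 := fun θ => Matrix.mul_nonsing_inv _ (hPinv θ)
  have hPPl : ∀ θ, (P θ)⁻¹ * P θ = 1 := fun θ => Matrix.nonsing_inv_mul _ (hPinv θ)
  set Q : ℝ → Matrix (Fin 4) (Fin 4) ℝ := fun θ => (P θ)⁻¹ with hQdef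
  have hDF : ∀ θ, DFm θ = P (θ + ω) * Λ * Q θ := by
    intro θ
    calc DFm θ = DFm θ * (P θ * Q θ) := by
            simp only [hQdef]; rw [hPP θ, Matrix.mul_one]
      _ = DFm θ * P θ * Q θ := by rw [Matrix.mul_assoc]
      _ = P (θ + ω) * Λ * Q θ := by rw [hPΛ]
  have hBA : ∀ θ, (P θ * N 1 * Q (θ + ω)) * DFm θ = 1 := by
    intro θ
    rw [hDF θ]
    calc (P θ * N 1 * Q (θ + ω)) * (P (θ + ω) * Λ * Q θ)
        = P θ * (N 1 * ((Q (θ + ω) * P (θ + ω)) * Λ)) * Q θ := by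
          simp only [Matrix.mul_assoc]
      _ = 1 := by
          simp only [hQdef]
          rw [hPPl, Matrix.one_mul, hN1Λ, Matrix.mul_one, hPP]
  have hdetDF : ∀ θ, IsUnit (DFm θ).det := fun θ =>
    Matrix.isUnit_det_of_left_inverse (hBA θ)
  have hA : ∀ θ, (DFm θ)⁻¹ = P θ * N 1 * Q (θ + ω) := fun θ =>
    Matrix.inv_eq_left_inv (hBA θ)
  have hDFDF : ∀ θ, DFm θ * (DFm θ)⁻¹ = 1 := fun θ =>
    Matrix.mul_nonsing_inv _ (hdetDF θ)
  -- continuity and periodicity of Q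
  have hdetc : Continuous fun θ => (P θ).det := hPc.matrix_det
  have hdetne : ∀ θ, (P θ).det ≠ 0 := fun θ => (hPinv θ).ne_zero
  have hQc : Continuous Q := by
    have h1 : ∀ θ, Q θ = ((P θ).det)⁻¹ • (P θ).adjugate := by
      intro θ; simp only [hQdef]; rw [Matrix.inv_def, Ring.inverse_eq_inv']
    rw [funext h1]
    exact (hdetc.inv₀ hdetne).smul hPc.matrix_adjugate
  have hQper : Function.Periodic Q (2 * Real.pi) := fun θ => by
    simp only [hQdef]; rw [hPper θ]
  -- the series terms
  set f : ℕ → ℝ → (Fin 4 → ℝ) := fun j θ =>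
    -(lam ^ (k * j) • (P θ).mulVec ((N (j + 1)).mulVec
        ((Q (θ + ((j : ℝ) + 1) * ω)).mulVec (Ek (θ + (j : ℝ) * ω))))) with hfdef
  have hstep : ∀ j θ, lam ^ k • (DFm θ)⁻¹.mulVec (f j (θ + ω)) = f (j + 1) θ := by
    intro j θ
    have hAP : (DFm θ)⁻¹ * P (θ + ω) = P θ * N 1 := by
      rw [hA θ, Matrix.mul_assoc]
      rw [show Q (θ + ω) * P (θ + ω) = 1 from hPPl (θ + ω), Matrix.mul_one]
    have harg1 : θ + ω + ((j : ℝ) + 1) * ω = θ + ((j : ℝ) + 1 + 1) * ω := by ring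
    have harg2 : θ + ω + (j : ℝ) * ω = θ + ((j : ℝ) + 1) * ω := by ring
    have hpow : lam ^ k * lam ^ (k * j) = lam ^ (k * (j + 1)) := by
      rw [← pow_add]; congr 1; ring
    have hNmul : N 1 * N (j + 1) = N (j + 1 + 1) := Naux_one_mul T lams lamu (j + 1)
    simp only [hfdef, harg1, harg2, Nat.cast_add, Nat.cast_one]
    set Y := (Q (θ + ((j : ℝ) + 1 + 1) * ω)).mulVec (Ek (θ + ((j : ℝ) + 1) * ω)) with hY
    calc lam ^ k • (DFm θ)⁻¹.mulVec
          (-(lam ^ (k * j) • (P (θ + ω)).mulVec ((N (j + 1)).mulVec Y)))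
        = lam ^ k • -(lam ^ (k * j) •
            (DFm θ)⁻¹.mulVec ((P (θ + ω)).mulVec ((N (j + 1)).mulVec Y))) := by
          rw [Matrix.mulVec_neg, Matrix.mulVec_smul]
      _ = -((lam ^ k * lam ^ (k * j)) •
            ((DFm θ)⁻¹ * P (θ + ω)).mulVec ((N (j + 1)).mulVec Y)) := by
          rw [Matrix.mulVec_mulVec, smul_neg, smul_smul]
      _ = -(lam ^ (k * (j + 1)) • (P θ * N 1).mulVec ((N (j + 1)).mulVec Y)) := by
          rw [hAP, hpow]
      _ = -(lam ^ (k * (j + 1)) • (P θ).mulVec ((N (j + 1 + 1)).mulVec Y)) := by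
          rw [← Matrix.mulVec_mulVec, Matrix.mulVec_mulVec Y (N 1) (N (j + 1)), hNmul]
  have hbase : ∀ θ, -((DFm θ)⁻¹.mulVec (Ek θ)) = f 0 θ := by
    intro θ
    simp only [hfdef, Nat.cast_zero, zero_add, one_mul, zero_mul, add_zero,
      Nat.mul_zero, pow_zero, one_smul]
    rw [hA θ, ← Matrix.mulVec_mulVec, ← Matrix.mulVec_mulVec]
  have hWsum : ∀ i θ, W i θ = ∑ j ∈ Finset.range i, f j θ := by
    intro i
    induction i with
    | zero => intro θ; simp [hW0 θ]
    | succ i ih =>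
      intro θ
      rw [hWrec i θ, ih (θ + ω), Finset.sum_range_succ']
      have hsum : (DFm θ)⁻¹.mulVec (∑ j ∈ Finset.range i, f j (θ + ω))
          = ∑ j ∈ Finset.range i, (DFm θ)⁻¹.mulVec (f j (θ + ω)) := by
        simpa only [Matrix.mulVecLin_apply] using
          map_sum ((DFm θ)⁻¹).mulVecLin (fun j => f j (θ + ω)) (Finset.range i)
      rw [hsum, Finset.smul_sum, sub_eq_add_neg, hbase θ]
      congr 1
      exact Finset.sum_congr rfl fun j _ => hstep j θ
  -- bounds
  obtain ⟨CP, hCP0, hCP⟩ := myEntryBound hPc hPper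
  obtain ⟨CQ, hCQ0, hCQ⟩ := myEntryBound hQc hQper
  obtain ⟨CE, hCE0, hCE⟩ : ∃ C, 0 ≤ C ∧ ∀ θ, ‖Ek θ‖ ≤ C :=
    myPeriodicBound hEkc.norm (fun θ => by simp [hEkper θ])
  set CN := 1 + |T| + s⁻¹ with hCNdef
  have hCN1 : (1:ℝ) ≤ CN := by
    have : (0:ℝ) ≤ |T| := abs_nonneg _
    have : (0:ℝ) ≤ s⁻¹ := by positivity
    simp only [hCNdef]; linarith
  have hCNT : |T| ≤ CN := by
    have : (0:ℝ) ≤ s⁻¹ := by positivity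
    simp only [hCNdef]; linarith
  have hCNs : s⁻¹ ≤ CN := by
    have : (0:ℝ) ≤ |T| := abs_nonneg _
    simp only [hCNdef]; linarith
  have hCN0 : 0 ≤ CN := le_trans zero_le_one hCN1
  have hgeo : ∀ j : ℕ, (0:ℝ) ≤ ((j:ℝ) + 1) * s ^ j := fun j => by positivity
  have hNb : ∀ (j : ℕ) (i i' : Fin 4),
      |lam ^ (k * j) * N (j + 1) i i'| ≤ CN * (((j:ℝ) + 1) * s ^ j) := by
    intro j i i'
    have habs : |lam ^ (k * j)| = s ^ (k * j) := by rw [hlam, abs_pow]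
    have hjk : j ≤ k * j := Nat.le_mul_of_pos_left j (by omega)
    have hjk2 : 2 * j ≤ k * j := Nat.mul_le_mul_right j hk
    have hkj1 : s ^ (k * j) ≤ s ^ j := pow_le_pow_of_le_one hs0.le hs1.le hjk
    have hkj2 : s ^ (k * j) ≤ s ^ (2 * j) := pow_le_pow_of_le_one hs0.le hs1.le hjk2
    have hsp0 : (0:ℝ) ≤ s ^ j := by positivity
    have hskj0 : (0:ℝ) ≤ s ^ (k * j) := by positivity
    have h1 : s ^ j ≤ ((j:ℝ) + 1) * s ^ j := by nlinarith [Nat.cast_nonneg (α := ℝ) j]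
    -- main scalar bounds
    have hone : s ^ (k * j) ≤ CN * (((j:ℝ) + 1) * s ^ j) := by
      calc s ^ (k * j) ≤ s ^ j := hkj1
        _ ≤ ((j:ℝ) + 1) * s ^ j := h1
        _ ≤ CN * (((j:ℝ) + 1) * s ^ j) := le_mul_of_one_le_left (hgeo j) hCN1
    have hTbd : s ^ (k * j) * (((j:ℝ) + 1) * |T|) ≤ CN * (((j:ℝ) + 1) * s ^ j) := by
      have : s ^ (k * j) * (((j:ℝ) + 1) * |T|) ≤ s ^ j * (((j:ℝ) + 1) * |T|) :=
        mul_le_mul_of_nonneg_right hkj1 (by positivity)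
      calc s ^ (k * j) * (((j:ℝ) + 1) * |T|) ≤ s ^ j * (((j:ℝ) + 1) * |T|) := this
        _ = |T| * (((j:ℝ) + 1) * s ^ j) := by ring
        _ ≤ CN * (((j:ℝ) + 1) * s ^ j) := mul_le_mul_of_nonneg_right hCNT (hgeo j)
    have hsinv : s ^ (k * j) * (s⁻¹) ^ (j + 1) ≤ CN * (((j:ℝ) + 1) * s ^ j) := by
      have hkey : s ^ (k * j) * (s⁻¹) ^ (j + 1) ≤ s⁻¹ * s ^ j := by
        rw [inv_pow]
        rw [mul_inv_le_iff₀ (pow_pos hs0 (j + 1))]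
        calc s ^ (k * j) ≤ s ^ (2 * j) := hkj2
          _ = s⁻¹ * s ^ j * s ^ (j + 1) := by
              field_simp
              ring
      calc s ^ (k * j) * (s⁻¹) ^ (j + 1) ≤ s⁻¹ * s ^ j := hkey
        _ ≤ s⁻¹ * (((j:ℝ) + 1) * s ^ j) := mul_le_mul_of_nonneg_left h1 (by positivity)
        _ ≤ CN * (((j:ℝ) + 1) * s ^ j) := mul_le_mul_of_nonneg_right hCNs (hgeo j)
    have hubd : s ^ (k * j) * (|lamu|⁻¹) ^ (j + 1) ≤ CN * (((j:ℝ) + 1) * s ^ j) := by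
      have hlu1 : |lamu|⁻¹ ≤ 1 := inv_le_one_of_one_le₀ hlu.le
      have hlu2 : (|lamu|⁻¹) ^ (j + 1) ≤ 1 :=
        pow_le_one₀ (inv_nonneg.mpr (abs_nonneg _)) hlu1
      calc s ^ (k * j) * (|lamu|⁻¹) ^ (j + 1) ≤ s ^ (k * j) * 1 :=
            mul_le_mul_of_nonneg_left hlu2 hskj0
        _ = s ^ (k * j) := by ring
        _ ≤ CN * (((j:ℝ) + 1) * s ^ j) := hone
    have hT1 : |(-1 + -(j:ℝ))| = (j:ℝ) + 1 := by
      rw [abs_of_nonpos (by nlinarith [Nat.cast_nonneg (α := ℝ) j])]; ring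
    fin_cases i <;> fin_cases i' <;>
      simp only [hNdef] <;> simp [Naux, Matrix.vecHead, Matrix.vecTail] <;>
      first
        | positivity
        | (rw [hlam, ← hs]; exact hone)
        | (rw [abs_mul, habs, abs_mul, hT1]; exact hTbd)
        | (rw [abs_mul, habs, abs_inv, abs_pow, ← hs, ← inv_pow]; exact hsinv)
        | (rw [abs_mul, habs, abs_inv, abs_pow, ← inv_pow]; exact hubd)
        | (rw [← abs_pow lam, habs, hT1]; exact hTbd)
        | (rw [← abs_pow lam, habs, ← hs, ← inv_pow]; exact hsinv)
        | (rw [← abs_pow lam, habs, ← inv_pow]; exact hubd)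
  -- norm bound on f
  set D := (64 * CP * CN * CQ * CE : ℝ) with hDdef
  set u : ℕ → ℝ := fun j => D * (((j:ℝ) + 1) * s ^ j) with hu
  have hfb : ∀ (j : ℕ) (θ : ℝ), ‖f j θ‖ ≤ u j := by
    intro j θ
    have e1 : ‖f j θ‖ = ‖(P θ).mulVec ((lam ^ (k * j) • N (j + 1)).mulVec
        ((Q (θ + ((j:ℝ) + 1) * ω)).mulVec (Ek (θ + (j:ℝ) * ω))))‖ := by
      simp only [hfdef, norm_neg, Matrix.smul_mulVec, Matrix.mulVec_smul]
    rw [e1]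
    have b1 : ‖(Q (θ + ((j:ℝ) + 1) * ω)).mulVec (Ek (θ + (j:ℝ) * ω))‖ ≤ 4 * CQ * CE := by
      calc ‖(Q (θ + ((j:ℝ) + 1) * ω)).mulVec (Ek (θ + (j:ℝ) * ω))‖
          ≤ 4 * CQ * ‖Ek (θ + (j:ℝ) * ω)‖ := myMulVecBound _ _ hCQ0 (fun i j' => hCQ _ i j')
        _ ≤ 4 * CQ * CE := by nlinarith [hCE (θ + (j:ℝ) * ω), norm_nonneg (Ek (θ + (j:ℝ) * ω))]
    have b2 : ‖(lam ^ (k * j) • N (j + 1)).mulVec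
        ((Q (θ + ((j:ℝ) + 1) * ω)).mulVec (Ek (θ + (j:ℝ) * ω)))‖
        ≤ 4 * (CN * (((j:ℝ) + 1) * s ^ j)) * (4 * CQ * CE) := by
      calc ‖(lam ^ (k * j) • N (j + 1)).mulVec _‖
          ≤ 4 * (CN * (((j:ℝ) + 1) * s ^ j)) * ‖(Q (θ + ((j:ℝ) + 1) * ω)).mulVec
              (Ek (θ + (j:ℝ) * ω))‖ := by
            apply myMulVecBound _ _ (by positivity)
            intro i i'
            simpa [Matrix.smul_apply, smul_eq_mul] using hNb j i i'
        _ ≤ 4 * (CN * (((j:ℝ) + 1) * s ^ j)) * (4 * CQ * CE) := by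
            apply mul_le_mul_of_nonneg_left b1 (by positivity)
    calc ‖(P θ).mulVec _‖
        ≤ 4 * CP * ‖(lam ^ (k * j) • N (j + 1)).mulVec
            ((Q (θ + ((j:ℝ) + 1) * ω)).mulVec (Ek (θ + (j:ℝ) * ω)))‖ :=
          myMulVecBound _ _ hCP0 (fun i j' => hCP _ i j')
      _ ≤ 4 * CP * (4 * (CN * (((j:ℝ) + 1) * s ^ j)) * (4 * CQ * CE)) :=
          mul_le_mul_of_nonneg_left b2 (by positivity)
      _ = u j := by simp only [hu, hDdef]; ring
  have hus : Summable u := by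
    have h1 : Summable (fun j : ℕ => (j:ℝ) * s ^ j) := by
      simpa using summable_pow_mul_geometric_of_norm_lt_one 1
        (r := s) (by rwa [Real.norm_eq_abs, abs_of_pos hs0])
    have h2 : Summable (fun j : ℕ => s ^ j) := summable_geometric_of_lt_one hs0.le hs1
    have h3 : Summable (fun j : ℕ => ((j:ℝ) + 1) * s ^ j) := by
      have := h1.add h2
      simpa [add_mul] using this
    simpa [hu] using h3.mul_left D
  -- uniform convergence
  have htu0 := tendstoUniformly_tsum_nat hus hfb
  set Wk : ℝ → (Fin 4 → ℝ) := fun θ => ∑' n, f n θ with hWk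
  have heq : (fun i θ => W i θ) = fun N' θ => ∑ n ∈ Finset.range N', f n θ := by
    funext i θ; exact hWsum i θ
  have htu : TendstoUniformly (fun i θ => W i θ) Wk Filter.atTop := by
    rw [heq]; exact htu0
  -- continuity
  have hfc : ∀ j, Continuous (f j) := by
    intro j
    apply Continuous.neg
    apply Continuous.fun_const_smul
    apply hPc.matrix_mulVec
    apply Continuous.matrix_mulVec continuous_const
    apply Continuous.matrix_mulVec (hQc.comp (continuous_id.add continuous_const))
    exact hEkc.comp (continuous_id.add continuous_const)
  have hWc : ∀ i, Continuous (fun θ => W i θ) := by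
    intro i
    have h : (fun θ => W i θ) = fun θ => ∑ j ∈ Finset.range i, f j θ := funext (hWsum i)
    rw [h]
    exact continuous_finset_sum _ fun j _ => hfc j
  have hWkc : Continuous Wk := htu.continuous (Filter.Eventually.of_forall hWc).frequently
  -- the functional equation
  have hWkeq : ∀ θ, Wk θ
      = lam ^ k • (DFm θ)⁻¹.mulVec (Wk (θ + ω)) - (DFm θ)⁻¹.mulVec (Ek θ) := by
    intro θ
    have hl1 : Filter.Tendsto (fun i => W i θ) Filter.atTop (nhds (Wk θ)) :=
      htu.tendsto_at θ
    have hl2 : Filter.Tendsto (fun i => W (i + 1) θ) Filter.atTop (nhds (Wk θ)) :=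
      hl1.comp (Filter.tendsto_add_atTop_nat 1)
    have hl3 : Filter.Tendsto (fun i => W i (θ + ω)) Filter.atTop (nhds (Wk (θ + ω))) :=
      htu.tendsto_at (θ + ω)
    have hmc : Continuous fun v : Fin 4 → ℝ =>
        lam ^ k • (DFm θ)⁻¹.mulVec v - (DFm θ)⁻¹.mulVec (Ek θ) :=
      ((continuous_const.matrix_mulVec continuous_id).fun_const_smul _).sub continuous_const
    have hl4 : Filter.Tendsto
        (fun i => lam ^ k • (DFm θ)⁻¹.mulVec (W i (θ + ω)) - (DFm θ)⁻¹.mulVec (Ek θ))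
        Filter.atTop
        (nhds (lam ^ k • (DFm θ)⁻¹.mulVec (Wk (θ + ω)) - (DFm θ)⁻¹.mulVec (Ek θ))) :=
      (hmc.tendsto _).comp hl3
    have hfe : (fun i => W (i + 1) θ)
        = fun i => lam ^ k • (DFm θ)⁻¹.mulVec (W i (θ + ω)) - (DFm θ)⁻¹.mulVec (Ek θ) :=
      funext fun i => hWrec i θ
    rw [hfe] at hl2
    exact tendsto_nhds_unique hl2 hl4
  refine ⟨Wk, hWkc, htu, fun θ => ?_⟩
  have h2 : (DFm θ).mulVec (Wk θ) = lam ^ k • Wk (θ + ω) - Ek θ := by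
    rw [hWkeq θ, Matrix.mulVec_sub, Matrix.mulVec_smul, Matrix.mulVec_mulVec, hDFDF θ,
      Matrix.one_mulVec, Matrix.mulVec_mulVec, hDFDF θ, Matrix.one_mulVec]
  rw [h2]
  abel
end

section
/- Let λ ∈ ℝ with |λ| > 1 (unstable case), k ≥ 2, and the same setup as the stable case with λ = λu, |λs| < 1 < |λu|, DF(K(θ))P(θ) = P(θ+ω)Λ. The sequence W_{k,0} = 0, W_{k,i+1}(θ) = λ^{−k} DF(K(θ−ω)) W_{k,i}(θ−ω) + λ^{−k} E_k(θ−ω) converges uniformly to a continuous W_k satisfying DF(K(θ)) W_k(θ) − λ^k W_k(θ+ω) = −E_k(θ). -/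
open scoped Real
open Matrix

attribute [local instance] Matrix.linftyOpNormedRing Matrix.linftyOpNormedAlgebra

lemma my_periodic_bound {E : Type*} [NormedAddCommGroup E] (f : ℝ → E)
    (hc : Continuous f) (hp : Function.Periodic f (2 * Real.pi)) :
    ∃ C : ℝ, 0 ≤ C ∧ ∀ θ, ‖f θ‖ ≤ C := by
  obtain ⟨C, hC⟩ := (isCompact_Icc (a := (0:ℝ)) (b := 2 * Real.pi)).exists_bound_of_continuousOn
    hc.continuousOn
  refine ⟨max C 0, le_max_right _ _, fun θ => ?_⟩
  obtain ⟨y, hy, hfy⟩ := hp.exists_mem_Ico₀ (by positivity) θ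
  rw [hfy]
  exact le_trans (hC y ⟨hy.1, hy.2.le⟩) (le_max_left _ _)

lemma my_pow_formula (T lams lamu : ℝ) (j : ℕ) :
    (!![1, T, 0, 0; 0, 1, 0, 0; 0, 0, lams, 0; 0, 0, 0, lamu] : Matrix (Fin 4) (Fin 4) ℝ) ^ j
      = !![1, j * T, 0, 0; 0, 1, 0, 0; 0, 0, lams ^ j, 0; 0, 0, 0, lamu ^ j] := by
  induction j with
  | zero =>
      ext i j
      fin_cases i <;> fin_cases j <;>
        simp [Matrix.one_apply, Matrix.vecHead, Matrix.vecTail]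
  | succ n ih =>
      rw [pow_succ, ih]
      ext i j
      fin_cases i <;> fin_cases j <;>
        simp [Matrix.mul_apply, Fin.sum_univ_four, pow_succ, Matrix.vecHead, Matrix.vecTail] <;>
        ring

lemma my_norm_bound (T lams lamu : ℝ) (j : ℕ) :
    ‖(!![1, (j:ℝ) * T, 0, 0; 0, 1, 0, 0; 0, 0, lams ^ j, 0; 0, 0, 0, lamu ^ j] :
        Matrix (Fin 4) (Fin 4) ℝ)‖ ≤ 1 + j * |T| + |lams| ^ j + |lamu| ^ j := by
  have h1 : (0:ℝ) ≤ |lams| ^ j := by positivity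
  have h2 : (0:ℝ) ≤ |lamu| ^ j := by positivity
  have h3 : (0:ℝ) ≤ (j:ℝ) * |T| := by positivity
  have hb : (0:ℝ) ≤ 1 + j * |T| + |lams| ^ j + |lamu| ^ j := by linarith
  rw [Matrix.linfty_opNorm_def, ← Real.coe_toNNReal _ hb, NNReal.coe_le_coe]
  apply Finset.sup_le
  intro i _
  rw [← NNReal.coe_le_coe, NNReal.coe_sum, Real.coe_toNNReal _ hb]
  fin_cases i <;>
    simp [Fin.sum_univ_four, abs_mul, abs_pow, Nat.abs_cast, Matrix.vecHead, Matrix.vecTail] <;>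
    linarith

lemma my_summable (T lams lamu : ℝ) (k : ℕ) (hk : 2 ≤ k)
    (hls : |lams| < 1) (hlu : 1 < |lamu|) :
    Summable (fun j : ℕ =>
      ((|lamu| ^ k)⁻¹) ^ (j + 1) * (1 + j * |T| + |lams| ^ j + |lamu| ^ j)) := by
  set r := (|lamu| ^ k)⁻¹ with hr_def
  have hk0 : k ≠ 0 := by omega
  have hrpos : 0 < |lamu| ^ k := pow_pos (lt_trans one_pos hlu) k
  have hr0 : 0 ≤ r := inv_nonneg.2 hrpos.le
  have hr1 : r < 1 := by
    rw [hr_def, inv_lt_one_iff₀]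
    right; exact one_lt_pow₀ hlu hk0
  have h1 : Summable (fun j : ℕ => r ^ j) := summable_geometric_of_lt_one hr0 hr1
  have h2 : Summable (fun j : ℕ => |T| * ((j:ℝ) ^ 1 * r ^ j)) := by
    refine Summable.mul_left _ ?_
    exact summable_pow_mul_geometric_of_norm_lt_one 1
      (by rwa [Real.norm_eq_abs, abs_of_nonneg hr0])
  have h3 : Summable (fun j : ℕ => (r * |lams|) ^ j) := by
    refine summable_geometric_of_lt_one (by positivity) ?_
    calc r * |lams| ≤ r * 1 := by gcongr
    _ < 1 := by rwa [mul_one]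
  have h4 : Summable (fun j : ℕ => (r * |lamu|) ^ j) := by
    refine summable_geometric_of_lt_one (by positivity) ?_
    rw [hr_def, mul_comm, ← div_eq_mul_inv, div_lt_one hrpos]
    calc |lamu| = |lamu| ^ 1 := (pow_one _).symm
    _ < |lamu| ^ k := pow_lt_pow_right₀ hlu (by omega)
  have h : Summable (fun j : ℕ =>
      r * (r ^ j + |T| * ((j:ℝ) ^ 1 * r ^ j) + (r * |lams|) ^ j + (r * |lamu|) ^ j)) :=
    (((h1.add h2).add h3).add h4).mul_left r
  refine h.congr fun j => ?_
  ring

/-- unstable case `|λ| > 1`, `λ = λu`: the fixed-point iteration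
`W_{k,0} = 0`, `W_{k,i+1}(θ) = λ^{−k} DF(K(θ−ω)) W_{k,i}(θ−ω) + λ^{−k} E_k(θ−ω)`
converges uniformly to a continuous `W_k` solving
`DF(K(θ)) W_k(θ) − λ^k W_k(θ+ω) = −E_k(θ)`. -/
theorem stmt11 (ω T lams lamu lam : ℝ) (k : ℕ) (hk : 2 ≤ k)
    (hlam : lam = lamu) (hls : |lams| < 1) (hlu : 1 < |lamu|)
    (F : (Fin 4 → ℝ) → (Fin 4 → ℝ)) (hF : ContDiff ℝ 1 F)
    (K : ℝ → (Fin 4 → ℝ)) (hKc : Continuous K)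
    (hKper : Function.Periodic K (2 * Real.pi))
    (hinv : ∀ θ, F (K θ) = K (θ + ω))
    (DFm : ℝ → Matrix (Fin 4) (Fin 4) ℝ)
    (hDFm : ∀ θ (v : Fin 4 → ℝ), fderiv ℝ F (K θ) v = (DFm θ).mulVec v)
    (P : ℝ → Matrix (Fin 4) (Fin 4) ℝ) (hPc : Continuous P)
    (hPper : Function.Periodic P (2 * Real.pi))
    (hPinv : ∀ θ, IsUnit (P θ).det)
    (Λ : Matrix (Fin 4) (Fin 4) ℝ)
    (hΛ : Λ = !![1, T, 0, 0; 0, 1, 0, 0; 0, 0, lams, 0; 0, 0, 0, lamu])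
    (hPΛ : ∀ θ, DFm θ * P θ = P (θ + ω) * Λ)
    (Ek : ℝ → (Fin 4 → ℝ)) (hEkc : Continuous Ek)
    (hEkper : Function.Periodic Ek (2 * Real.pi))
    (W : ℕ → ℝ → (Fin 4 → ℝ)) (hW0 : ∀ θ, W 0 θ = 0)
    (hWrec : ∀ i θ, W (i + 1) θ
      = (lam ^ k)⁻¹ • (DFm (θ - ω)).mulVec (W i (θ - ω))
        + (lam ^ k)⁻¹ • Ek (θ - ω)) :
    ∃ Wk : ℝ → (Fin 4 → ℝ), Continuous Wk ∧
      TendstoUniformly (fun i θ => W i θ) Wk Filter.atTop ∧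
      ∀ θ, (DFm θ).mulVec (Wk θ) - lam ^ k • Wk (θ + ω) = -(Ek θ) := by
  subst hlam
  have hlam0 : lam ≠ 0 := by
    intro h; rw [h] at hlu; simp at hlu; linarith
  have hμ : lam ^ k ≠ 0 := pow_ne_zero _ hlam0
  -- inverse facts
  have hPunit : ∀ θ, P θ * (P θ)⁻¹ = 1 := fun θ => Matrix.mul_nonsing_inv _ (hPinv θ)
  have hPunit' : ∀ θ, (P θ)⁻¹ * P θ = 1 := fun θ => Matrix.nonsing_inv_mul _ (hPinv θ)
  have hDF : ∀ θ, DFm θ = P (θ + ω) * Λ * (P θ)⁻¹ := by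
    intro θ
    have h := congrArg (· * (P θ)⁻¹) (hPΛ θ)
    simpa [Matrix.mul_assoc, hPunit θ] using h
  -- continuity of the inverse and of DFm
  have hdet0 : ∀ θ, (P θ).det ≠ 0 := fun θ => (isUnit_iff_ne_zero).mp (hPinv θ)
  have hPic : Continuous fun θ => (P θ)⁻¹ := by
    have h : Continuous fun θ => ((P θ).det)⁻¹ • (P θ).adjugate :=
      (hPc.matrix_det.inv₀ hdet0).smul hPc.matrix_adjugate
    simpa [Matrix.inv_def, Ring.inverse_eq_inv'] using h
  have hDFc : Continuous DFm := by
    rw [show DFm = fun θ => P (θ + ω) * Λ * (P θ)⁻¹ from funext hDF]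
    exact ((hPc.comp (continuous_id.add continuous_const)).mul continuous_const).mul hPic
  -- the series terms
  set g : ℕ → ℝ → (Fin 4 → ℝ) := fun j θ =>
    ((lam ^ k)⁻¹) ^ (j + 1) •
      (P θ * Λ ^ j * (P (θ - j * ω))⁻¹).mulVec (Ek (θ - (j + 1) * ω)) with hg_def
  have key0 : ∀ θ, g 0 θ = (lam ^ k)⁻¹ • Ek (θ - ω) := by
    intro θ
    simp [hg_def, hPunit, Matrix.one_mulVec]
  have key : ∀ (j : ℕ) (θ : ℝ),
      (lam ^ k)⁻¹ • (DFm (θ - ω)).mulVec (g j (θ - ω)) = g (j + 1) θ := by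
    intro j θ
    simp only [hg_def]
    push_cast
    have e1 : θ - ω - (j:ℝ) * ω = θ - ((j:ℝ) + 1) * ω := by ring
    have e2 : θ - ω - ((j:ℝ) + 1) * ω = θ - ((j:ℝ) + 1 + 1) * ω := by ring
    rw [e1, e2, hDF (θ - ω), sub_add_cancel]
    rw [Matrix.mulVec_smul, Matrix.mulVec_mulVec, smul_smul, ← pow_succ']
    congr 1
    have h : (P (θ - ω))⁻¹ * (P (θ - ω) * Λ ^ j * (P (θ - ((j:ℝ) + 1) * ω))⁻¹)
        = Λ ^ j * (P (θ - ((j:ℝ) + 1) * ω))⁻¹ := by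
      rw [← Matrix.mul_assoc, ← Matrix.mul_assoc, hPunit', Matrix.one_mul]
    rw [Matrix.mul_assoc (P θ * Λ), h, pow_succ']
    simp [Matrix.mul_assoc]
  have hW : ∀ i θ, W i θ = ∑ j ∈ Finset.range i, g j θ := by
    intro i
    induction i with
    | zero => intro θ; simp [hW0]
    | succ n ih =>
        intro θ
        rw [hWrec n θ, ih (θ - ω), Finset.sum_range_succ']
        congr 1
        · rw [← Matrix.mulVecLin_apply, map_sum, Finset.smul_sum]
          exact Finset.sum_congr rfl fun j _ => by
            rw [Matrix.mulVecLin_apply]; exact key j θ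
        · exact (key0 θ).symm
  -- bounds
  obtain ⟨cP, hcP0, hcP⟩ := my_periodic_bound P hPc hPper
  obtain ⟨cQ, hcQ0, hcQ⟩ := my_periodic_bound (fun θ => (P θ)⁻¹) hPic
    (fun θ => by simp [hPper θ])
  obtain ⟨cE, hcE0, hcE⟩ := my_periodic_bound Ek hEkc hEkper
  have hgb : ∀ (j : ℕ) (θ : ℝ), ‖g j θ‖ ≤
      cP * cQ * cE *
        (((|lam| ^ k)⁻¹) ^ (j + 1) * (1 + j * |T| + |lams| ^ j + |lam| ^ j)) := by
    intro j θ
    have hBj : ‖Λ ^ j‖ ≤ 1 + j * |T| + |lams| ^ j + |lam| ^ j := by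
      rw [hΛ, my_pow_formula]
      exact my_norm_bound T lams lam j
    have hB0 : (0:ℝ) ≤ 1 + j * |T| + |lams| ^ j + |lam| ^ j := by positivity
    have h1 : ‖(P θ * Λ ^ j * (P (θ - j * ω))⁻¹).mulVec (Ek (θ - (j + 1) * ω))‖ ≤
        cP * (1 + j * |T| + |lams| ^ j + |lam| ^ j) * cQ * cE := by
      calc ‖(P θ * Λ ^ j * (P (θ - j * ω))⁻¹).mulVec (Ek (θ - (j + 1) * ω))‖
          ≤ ‖P θ * Λ ^ j * (P (θ - j * ω))⁻¹‖ * ‖Ek (θ - (j + 1) * ω)‖ :=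
            Matrix.linfty_opNorm_mulVec _ _
        _ ≤ (‖P θ * Λ ^ j‖ * ‖(P (θ - j * ω))⁻¹‖) * ‖Ek (θ - (j + 1) * ω)‖ := by
            gcongr
            exact Matrix.linfty_opNorm_mul _ _
        _ ≤ ((‖P θ‖ * ‖Λ ^ j‖) * ‖(P (θ - j * ω))⁻¹‖) * ‖Ek (θ - (j + 1) * ω)‖ := by
            gcongr
            exact Matrix.linfty_opNorm_mul _ _
        _ ≤ ((cP * (1 + j * |T| + |lams| ^ j + |lam| ^ j)) * cQ) * cE := by
            gcongr <;> first
              | exact hcP θ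
              | exact hBj
              | exact hcQ _
              | exact hcE _
        _ = cP * (1 + j * |T| + |lams| ^ j + |lam| ^ j) * cQ * cE := by ring
    have hscal : ‖((lam ^ k)⁻¹) ^ (j + 1)‖ = ((|lam| ^ k)⁻¹) ^ (j + 1) := by
      rw [Real.norm_eq_abs, abs_pow, abs_inv, abs_pow]
    calc ‖g j θ‖ = ((|lam| ^ k)⁻¹) ^ (j + 1) *
          ‖(P θ * Λ ^ j * (P (θ - j * ω))⁻¹).mulVec (Ek (θ - (j + 1) * ω))‖ := by
          rw [hg_def]; rw [norm_smul, hscal]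
      _ ≤ ((|lam| ^ k)⁻¹) ^ (j + 1) *
          (cP * (1 + j * |T| + |lams| ^ j + |lam| ^ j) * cQ * cE) := by
          gcongr <;> first | positivity | exact h1
      _ = cP * cQ * cE *
          (((|lam| ^ k)⁻¹) ^ (j + 1) * (1 + j * |T| + |lams| ^ j + |lam| ^ j)) := by ring
  have hsum : Summable (fun j : ℕ => cP * cQ * cE *
      (((|lam| ^ k)⁻¹) ^ (j + 1) * (1 + j * |T| + |lams| ^ j + |lam| ^ j))) :=
    (my_summable T lams lam k hk hls hlu).mul_left _
  -- uniform convergence of the partial sums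
  have hTUg : TendstoUniformly (fun i θ => ∑ j ∈ Finset.range i, g j θ)
      (fun θ => ∑' j, g j θ) Filter.atTop := by
    rw [← tendstoUniformlyOn_univ]
    exact tendstoUniformlyOn_tsum_nat hsum fun j θ _ => hgb j θ
  have hWeq : (fun i θ => W i θ) = fun i θ => ∑ j ∈ Finset.range i, g j θ :=
    funext fun i => funext fun θ => hW i θ
  have hTU : TendstoUniformly (fun i θ => W i θ) (fun θ => ∑' j, g j θ) Filter.atTop := by
    rw [hWeq]; exact hTUg
  -- continuity of each term
  have hgc : ∀ j, Continuous (g j) := by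
    intro j
    rw [hg_def]
    exact Continuous.const_smul
      (Continuous.matrix_mulVec
        ((hPc.mul continuous_const).mul (hPic.comp (continuous_id.sub continuous_const)))
        (hEkc.comp (continuous_id.sub continuous_const))) (((lam ^ k)⁻¹) ^ (j + 1))
  refine ⟨fun θ => ∑' j, g j θ, ?_, hTU, ?_⟩
  · exact hTUg.continuous (Filter.Frequently.of_forall fun i =>
      continuous_finset_sum _ fun j _ => hgc j)
  · intro θ
    have hptw : ∀ θ', Filter.Tendsto (fun i => W i θ') Filter.atTop
        (nhds (∑' j, g j θ')) := fun θ' => hTU.tendsto_at θ'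
    have h1 : Filter.Tendsto (fun i => W (i + 1) (θ + ω)) Filter.atTop
        (nhds (∑' j, g j (θ + ω))) :=
      (hptw (θ + ω)).comp (Filter.tendsto_add_atTop_nat 1)
    have hL : Continuous fun v : Fin 4 → ℝ => (DFm θ).mulVec v := by
      have := LinearMap.continuous_of_finiteDimensional (Matrix.mulVecLin (DFm θ))
      exact this
    have h2 : (fun i => W (i + 1) (θ + ω)) =
        fun i => (lam ^ k)⁻¹ • (DFm θ).mulVec (W i θ) + (lam ^ k)⁻¹ • Ek θ :=
      funext fun i => by rw [hWrec]; simp [add_sub_cancel_right]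
    have h3 : Filter.Tendsto
        (fun i => (lam ^ k)⁻¹ • (DFm θ).mulVec (W i θ) + (lam ^ k)⁻¹ • Ek θ)
        Filter.atTop
        (nhds ((lam ^ k)⁻¹ • (DFm θ).mulVec (∑' j, g j θ) + (lam ^ k)⁻¹ • Ek θ)) := by
      exact (((hL.tendsto _).comp (hptw θ)).const_smul _).add tendsto_const_nhds
    have heq : (∑' j, g j (θ + ω)) =
        (lam ^ k)⁻¹ • (DFm θ).mulVec (∑' j, g j θ) + (lam ^ k)⁻¹ • Ek θ :=
      tendsto_nhds_unique (h2 ▸ h1) h3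
    show (DFm θ) *ᵥ (∑' j, g j θ) - lam ^ k • ∑' j, g j (θ + ω) = -Ek θ
    rw [heq, smul_add, smul_inv_smul₀ hμ, smul_inv_smul₀ hμ]
    abel
end

section
/- Let F : ℝ⁴ → ℝ⁴ be a C² map, K, P, Λ an approximate solution with errors E(θ) := F(K(θ)) − K(θ+ω) and E_red(θ) := P(θ+ω)⁻¹DF(K(θ))P(θ) − Λ(θ). If ξ : 𝕋 → ℝ⁴ solves −P(θ+ω)⁻¹E(θ) = Λ(θ)ξ(θ) − ξ(θ+ω), then the new error E_new(θ) := F(K(θ)+P(θ)ξ(θ)) − (K(θ+ω)+P(θ+ω)ξ(θ+ω)) satisfies E_new(θ) = P(θ+ω)E_red(θ)ξ(θ) + R(θ) where ‖R(θ)‖ ≤ C‖ξ(θ)‖² for a constant C depending on bounds on D²F and ‖P‖ on a neighborhood of the image of K. In particular, sup‖E_new‖ ≤ sup‖P‖·sup‖E_red‖·sup‖ξ‖ + C sup‖ξ‖². -/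
open scoped Real
open Matrix

/-- The operator norm of a `4×4` real matrix acting on `Fin 4 → ℝ` by `mulVec`. -/
noncomputable def opNorm (M : Matrix (Fin 4) (Fin 4) ℝ) : ℝ :=
  ‖(LinearMap.toContinuousLinearMap (Matrix.mulVecLin M) :
      (Fin 4 → ℝ) →L[ℝ] (Fin 4 → ℝ))‖

lemma opNorm_nonneg' (M : Matrix (Fin 4) (Fin 4) ℝ) : 0 ≤ opNorm M := norm_nonneg _

lemma mulVec_norm_le (M : Matrix (Fin 4) (Fin 4) ℝ) (v : Fin 4 → ℝ) :
    ‖M.mulVec v‖ ≤ opNorm M * ‖v‖ := by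
  have := (LinearMap.toContinuousLinearMap (Matrix.mulVecLin M) :
      (Fin 4 → ℝ) →L[ℝ] (Fin 4 → ℝ)).le_opNorm v
  simpa [opNorm] using this

lemma opNorm_continuous : Continuous opNorm := by
  let L : Matrix (Fin 4) (Fin 4) ℝ →ₗ[ℝ] ((Fin 4 → ℝ) →L[ℝ] (Fin 4 → ℝ)) :=
    { toFun := fun M => LinearMap.toContinuousLinearMap (Matrix.mulVecLin M)
      map_add' := fun M N => by ext v; simp [Matrix.add_mulVec]
      map_smul' := fun c M => by ext v; simp [Matrix.smul_mulVec] }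
  exact (L.continuous_of_finiteDimensional).norm

lemma periodic_bound {h : ℝ → ℝ} (hc : Continuous h)
    (hp : Function.Periodic h (2 * Real.pi)) : ∃ C, ∀ θ, h θ ≤ C := by
  obtain ⟨C, hC⟩ :=
    (isCompact_Icc (a := (0:ℝ)) (b := 2 * Real.pi)).exists_bound_of_continuousOn hc.continuousOn
  refine ⟨C, fun θ => ?_⟩
  obtain ⟨y, hy, hyθ⟩ := hp.exists_mem_Ico₀ (by positivity) θ
  rw [hyθ]
  exact (le_abs_self _).trans (by simpa [Real.norm_eq_abs] using hC y ⟨hy.1, hy.2.le⟩)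

lemma periodic_bddAbove {h : ℝ → ℝ} (hc : Continuous h)
    (hp : Function.Periodic h (2 * Real.pi)) : BddAbove (Set.range h) := by
  obtain ⟨C, hC⟩ := periodic_bound hc hp
  exact ⟨C, by rintro x ⟨θ, rfl⟩; exact hC θ⟩

/-- quadratic error reduction of the quasi-Newton step for `K`. If `ξ` solves
`−P(θ+ω)⁻¹E(θ) = Λ(θ)ξ(θ) − ξ(θ+ω)`, then the new invariance error satisfies
`E_new(θ) = P(θ+ω) E_red(θ) ξ(θ) + R(θ)` with `‖R(θ)‖ ≤ C‖ξ(θ)‖²`, and in particular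
`sup‖E_new‖ ≤ sup‖P‖ ⋅ sup‖E_red‖ ⋅ sup‖ξ‖ + C sup‖ξ‖²`. -/
theorem stmt13 (ω : ℝ)
    (F : (Fin 4 → ℝ) → (Fin 4 → ℝ)) (hF : ContDiff ℝ 2 F)
    (K : ℝ → (Fin 4 → ℝ)) (hKc : Continuous K)
    (hKper : Function.Periodic K (2 * Real.pi))
    (DFm : ℝ → Matrix (Fin 4) (Fin 4) ℝ)
    (hDFm : ∀ θ (v : Fin 4 → ℝ), fderiv ℝ F (K θ) v = (DFm θ).mulVec v)
    (P : ℝ → Matrix (Fin 4) (Fin 4) ℝ) (hPc : Continuous P)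
    (hPper : Function.Periodic P (2 * Real.pi))
    (hPinv : ∀ θ, IsUnit (P θ).det)
    (Λ : ℝ → Matrix (Fin 4) (Fin 4) ℝ) (hΛc : Continuous Λ)
    (hΛper : Function.Periodic Λ (2 * Real.pi))
    (E : ℝ → (Fin 4 → ℝ)) (hE : ∀ θ, E θ = F (K θ) - K (θ + ω))
    (Ered : ℝ → Matrix (Fin 4) (Fin 4) ℝ)
    (hEred : ∀ θ, Ered θ = (P (θ + ω))⁻¹ * DFm θ * P θ - Λ θ)
    (ξ : ℝ → (Fin 4 → ℝ)) (hξc : Continuous ξ)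
    (hξper : Function.Periodic ξ (2 * Real.pi))
    (hξ : ∀ θ, -((P (θ + ω))⁻¹.mulVec (E θ)) = (Λ θ).mulVec (ξ θ) - ξ (θ + ω))
    (Enew : ℝ → (Fin 4 → ℝ))
    (hEnew : ∀ θ, Enew θ
      = F (K θ + (P θ).mulVec (ξ θ)) - (K (θ + ω) + (P (θ + ω)).mulVec (ξ (θ + ω)))) :
    ∃ Cb : ℝ, 0 ≤ Cb ∧ ∃ R : ℝ → (Fin 4 → ℝ),
      (∀ θ, Enew θ = (P (θ + ω)).mulVec ((Ered θ).mulVec (ξ θ)) + R θ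
        ∧ ‖R θ‖ ≤ Cb * ‖ξ θ‖ ^ 2) ∧
      (⨆ θ : ℝ, ‖Enew θ‖)
        ≤ (⨆ θ : ℝ, opNorm (P θ)) * (⨆ θ : ℝ, opNorm (Ered θ)) * (⨆ θ : ℝ, ‖ξ θ‖)
          + Cb * (⨆ θ : ℝ, ‖ξ θ‖) ^ 2 := by
  -- the quadratic Taylor remainder
  set v : ℝ → (Fin 4 → ℝ) := fun θ => (P θ).mulVec (ξ θ) with hv
  set R : ℝ → (Fin 4 → ℝ) :=
    fun θ => F (K θ + v θ) - F (K θ) - (DFm θ).mulVec (v θ) with hR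
  have hvc : Continuous v := hPc.matrix_mulVec hξc
  have hvper : Function.Periodic v (2 * Real.pi) := by
    intro θ; simp only [hv, hPper θ, hξper θ]
  -- differentiability facts
  have hFd : Differentiable ℝ F := hF.differentiable (by norm_num)
  have hF1 : ContDiff ℝ 1 (fderiv ℝ F) := hF.fderiv_right (le_refl 2)
  have hF1d : Differentiable ℝ (fderiv ℝ F) := hF1.differentiable one_ne_zero
  have hF1c : Continuous fun x => fderiv ℝ (fderiv ℝ F) x := hF1.continuous_fderiv one_ne_zero
  -- a radius capturing all the segments
  obtain ⟨ρ, hρ⟩ : ∃ C, ∀ θ, ‖K θ‖ + ‖v θ‖ ≤ C := by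
    refine periodic_bound (hKc.norm.add hvc.norm) ?_
    intro θ; simp only [hKper θ, hvper θ]
  -- bound on the second derivative on the ball
  obtain ⟨M0, hM0⟩ :=
    (isCompact_closedBall (0 : Fin 4 → ℝ) ρ).exists_bound_of_continuousOn
      (f := fun x => fderiv ℝ (fderiv ℝ F) x) hF1c.continuousOn
  set M : ℝ := max M0 0 with hM
  have hMnn : 0 ≤ M := le_max_right _ _
  -- sup of the operator norms of P
  have hPbdd : BddAbove (Set.range fun θ => opNorm (P θ)) :=
    periodic_bddAbove (opNorm_continuous.comp hPc) (hPper.comp opNorm)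
  set sP : ℝ := ⨆ θ : ℝ, opNorm (P θ) with hsP
  have hsPle : ∀ θ, opNorm (P θ) ≤ sP := fun θ => le_ciSup hPbdd θ
  have hsPnn : 0 ≤ sP := (opNorm_nonneg' (P 0)).trans (hsPle 0)
  -- the Taylor estimate
  have hRbound : ∀ θ, ‖R θ‖ ≤ M * ‖v θ‖ * ‖v θ‖ := by
    intro θ
    have hKs : K θ ∈ Metric.closedBall (0 : Fin 4 → ℝ) ρ := by
      rw [mem_closedBall_zero_iff]
      exact le_trans (le_add_of_nonneg_right (norm_nonneg _)) (hρ θ)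
    have hKvs : K θ + v θ ∈ Metric.closedBall (0 : Fin 4 → ℝ) ρ := by
      rw [mem_closedBall_zero_iff]
      exact le_trans (norm_add_le _ _) (hρ θ)
    have hseg : segment ℝ (K θ) (K θ + v θ) ⊆ Metric.closedBall (0 : Fin 4 → ℝ) ρ :=
      (convex_closedBall _ _).segment_subset hKs hKvs
    have hlip : ∀ x ∈ segment ℝ (K θ) (K θ + v θ),
        ‖fderiv ℝ F x - fderiv ℝ F (K θ)‖ ≤ M * ‖v θ‖ := by
      intro x hx
      have h1 : ‖fderiv ℝ F x - fderiv ℝ F (K θ)‖ ≤ M * ‖x - K θ‖ :=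
        (convex_closedBall _ _).norm_image_sub_le_of_norm_fderiv_le
          (fun y _ => hF1d y) (fun y hy => (hM0 y hy).trans (le_max_left _ _))
          (hKs) (hseg hx)
      refine h1.trans (mul_le_mul_of_nonneg_left ?_ hMnn)
      rw [segment_eq_image'] at hx
      obtain ⟨t, ⟨ht0, ht1⟩, rfl⟩ := hx
      rw [add_sub_cancel_left, add_sub_cancel_left, norm_smul, Real.norm_eq_abs,
        abs_of_nonneg ht0]
      exact mul_le_of_le_one_left (norm_nonneg _) ht1
    have h2 : ‖F (K θ + v θ) - F (K θ) - (fderiv ℝ F (K θ)) ((K θ + v θ) - K θ)‖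
        ≤ (M * ‖v θ‖) * ‖(K θ + v θ) - K θ‖ :=
      (convex_segment _ _).norm_image_sub_le_of_norm_fderiv_le'
        (fun x _ => hFd x) hlip (left_mem_segment _ _ _) (right_mem_segment _ _ _)
    rw [add_sub_cancel_left, hDFm θ (v θ)] at h2
    exact h2
  -- pointwise statements
  have hkey : ∀ θ, Enew θ = (P (θ + ω)).mulVec ((Ered θ).mulVec (ξ θ)) + R θ := by
    intro θ
    have hBinv : P (θ + ω) * (P (θ + ω))⁻¹ = 1 := Matrix.mul_nonsing_inv _ (hPinv (θ + ω))
    · -- algebraic identity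
      have hFK : F (K θ) = E θ + K (θ + ω) := by rw [hE θ]; abel
      have hEθ : E θ = (P (θ + ω)).mulVec (ξ (θ + ω))
          - (P (θ + ω)).mulVec ((Λ θ).mulVec (ξ θ)) := by
        have h := congrArg (P (θ + ω)).mulVec (hξ θ)
        rw [Matrix.mulVec_neg, Matrix.mulVec_mulVec, hBinv, Matrix.one_mulVec,
          Matrix.mulVec_sub] at h
        have := congrArg Neg.neg h
        rw [neg_neg, neg_sub] at this
        exact this
      have hmat : DFm θ * P θ = P (θ + ω) * Ered θ + P (θ + ω) * Λ θ := by
        have hcanc : P (θ + ω) * ((P (θ + ω))⁻¹ * DFm θ * P θ) = DFm θ * P θ := by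
          rw [← Matrix.mul_assoc, ← Matrix.mul_assoc, hBinv, Matrix.one_mul]
        rw [hEred θ, Matrix.mul_sub, hcanc]
        abel
      have hDFA : (DFm θ).mulVec (v θ)
          = (P (θ + ω)).mulVec ((Ered θ).mulVec (ξ θ))
            + (P (θ + ω)).mulVec ((Λ θ).mulVec (ξ θ)) := by
        simp only [hv, Matrix.mulVec_mulVec, hmat, Matrix.add_mulVec]
      have : Enew θ = R θ + F (K θ) + (DFm θ).mulVec (v θ)
          - (K (θ + ω) + (P (θ + ω)).mulVec (ξ (θ + ω))) := by
        rw [hEnew θ, hR]; simp only [hv]; abel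
      rw [this, hFK, hEθ, hDFA]
      abel
  have hRq : ∀ θ, ‖R θ‖ ≤ M * sP ^ 2 * ‖ξ θ‖ ^ 2 := by
      intro θ
      have h1 := hRbound θ
      have h2 : ‖v θ‖ ≤ sP * ‖ξ θ‖ := (mulVec_norm_le _ _).trans
        (mul_le_mul_of_nonneg_right (hsPle θ) (norm_nonneg _))
      calc ‖R θ‖ ≤ M * ‖v θ‖ * ‖v θ‖ := h1
        _ ≤ M * (sP * ‖ξ θ‖) * (sP * ‖ξ θ‖) := by
            have hvnn : (0:ℝ) ≤ ‖v θ‖ := norm_nonneg _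
            nlinarith [norm_nonneg (ξ θ), mul_le_mul_of_nonneg_left h2 hMnn]
        _ = M * sP ^ 2 * ‖ξ θ‖ ^ 2 := by ring
  -- entries of DFm
  have hDFmeq : ∀ θ i j, DFm θ i j = fderiv ℝ F (K θ) (Pi.single j 1) i := by
    intro θ i j
    have h := congrFun (hDFm θ (Pi.single j 1)) i
    rw [Matrix.mulVec_single] at h
    simpa using h.symm
  have hDFmc : Continuous DFm := by
    have heq : DFm = fun θ => Matrix.of fun i j => fderiv ℝ F (K θ) (Pi.single j 1) i := by
      funext θ; ext i j; exact hDFmeq θ i j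
    rw [heq]
    refine continuous_matrix fun i j => ?_
    exact (continuous_apply i).comp
      (((hF.continuous_fderiv (by norm_num)).comp hKc).clm_apply continuous_const)
  have hDFmper : Function.Periodic DFm (2 * Real.pi) := by
    intro θ; ext i j; rw [hDFmeq, hDFmeq, hKper θ]
  have hPinvc : Continuous fun θ => (P (θ + ω))⁻¹ := by
    have h1 : Continuous fun θ => P (θ + ω) := hPc.comp (continuous_id.add continuous_const)
    have heq : (fun θ => (P (θ + ω))⁻¹)
        = fun θ => ((P (θ + ω)).det)⁻¹ • (P (θ + ω)).adjugate := by
      funext θ; rw [Matrix.inv_def, Ring.inverse_eq_inv]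
    rw [heq]
    exact (h1.matrix_det.inv₀ fun θ => (hPinv (θ + ω)).ne_zero).smul h1.matrix_adjugate
  have hEredc : Continuous Ered := by
    have heq : Ered = fun θ => (P (θ + ω))⁻¹ * DFm θ * P θ - Λ θ := funext hEred
    rw [heq]
    exact ((hPinvc.matrix_mul hDFmc).matrix_mul hPc).sub hΛc
  have hEredper : Function.Periodic Ered (2 * Real.pi) := by
    intro θ
    rw [hEred, hEred, add_right_comm θ (2 * Real.pi) ω, hPper (θ + ω), hDFmper θ, hPper θ,
      hΛper θ]
  -- sups
  have hEredbdd : BddAbove (Set.range fun θ => opNorm (Ered θ)) :=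
    periodic_bddAbove (opNorm_continuous.comp hEredc) (hEredper.comp opNorm)
  have hξbdd : BddAbove (Set.range fun θ => ‖ξ θ‖) :=
    periodic_bddAbove hξc.norm (hξper.comp (‖·‖))
  set sE : ℝ := ⨆ θ : ℝ, opNorm (Ered θ) with hsE
  set sξ : ℝ := ⨆ θ : ℝ, ‖ξ θ‖ with hsξ
  have hsEle : ∀ θ, opNorm (Ered θ) ≤ sE := fun θ => le_ciSup hEredbdd θ
  have hsξle : ∀ θ, ‖ξ θ‖ ≤ sξ := fun θ => le_ciSup hξbdd θ
  have hsEnn : 0 ≤ sE := (opNorm_nonneg' (Ered 0)).trans (hsEle 0)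
  have hsξnn : 0 ≤ sξ := (norm_nonneg (ξ 0)).trans (hsξle 0)
  refine ⟨M * sP ^ 2, by positivity, R, fun θ => ⟨hkey θ, hRq θ⟩, ?_⟩
  apply ciSup_le
  intro θ
  rw [hkey θ]
  have e1 : ‖(P (θ + ω)).mulVec ((Ered θ).mulVec (ξ θ))‖ ≤ sP * (sE * sξ) := by
    refine (mulVec_norm_le _ _).trans (mul_le_mul (hsPle (θ + ω)) ?_ (norm_nonneg _) hsPnn)
    exact (mulVec_norm_le _ _).trans (mul_le_mul (hsEle θ) (hsξle θ) (norm_nonneg _) hsEnn)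
  have e2 : ‖R θ‖ ≤ M * sP ^ 2 * sξ ^ 2 := by
    refine (hRq θ).trans (mul_le_mul_of_nonneg_left ?_ (by positivity))
    exact pow_le_pow_left₀ (norm_nonneg _) (hsξle θ) 2
  calc ‖(P (θ + ω)).mulVec ((Ered θ).mulVec (ξ θ)) + R θ‖
      ≤ ‖(P (θ + ω)).mulVec ((Ered θ).mulVec (ξ θ))‖ + ‖R θ‖ := norm_add_le _ _
    _ ≤ sP * sE * sξ + M * sP ^ 2 * sξ ^ 2 := by rw [mul_assoc]; exact add_le_add e1 e2
end
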